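/- arXiv:1712.03794 — 9 statements merged into one kernel-verified Lean document; each statement's English description precedes it below -/
import Mathlib

section
/- Let T be a bounded, left-invertible and analytic operator on a complex Hilbert space H, E = ker T*, P_E the orthogonal projection onto E, L = (T*T)⁻¹T*. If a bounded operator A on H is a multiplication operator with some symbol φ : ℕ → B(E), then A commutes with T: AT = TA. -/
/-- Let `T` be bounded, left-invertible and analytic on a complex Hilbert
space `H`, `E = ker T*`, `P_E` the orthogonal projection onto `E`, `L = (T*T)⁻¹T*`.  If a
bounded operator `A` on `H` is a multiplication operator with some symbol `φ : ℕ → B(E)`,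
then `A` commutes with `T`: `AT = TA`. -/
theorem stmt_2
    {H : Type*} [NormedAddCommGroup H] [InnerProductSpace ℂ H] [CompleteSpace H]
    (T S : H →L[ℂ] H)
    (hbelow : ∃ α : ℝ, 0 < α ∧ ∀ f : H, α * ‖f‖ ^ 2 ≤ ‖T f‖ ^ 2)
    (hanalytic : (⨅ n : ℕ, LinearMap.range ((T ^ n : H →L[ℂ] H) : H →ₗ[ℂ] H)) = ⊥)
    (hS1 : S * (ContinuousLinearMap.adjoint T * T) = 1)
    (hS2 : (ContinuousLinearMap.adjoint T * T) * S = 1)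
    (L : H →L[ℂ] H) (hL : L = S * ContinuousLinearMap.adjoint T)
    (A : H →L[ℂ] H)
    (φ : ℕ → (LinearMap.ker (ContinuousLinearMap.adjoint T : H →ₗ[ℂ] H) →L[ℂ]
      LinearMap.ker (ContinuousLinearMap.adjoint T : H →ₗ[ℂ] H)))
    (hA : ∀ (f : H) (n : ℕ),
      Submodule.orthogonalProjectionOnto (LinearMap.ker (ContinuousLinearMap.adjoint T : H →ₗ[ℂ] H)) ((L ^ n) (A f)) =
        ∑ k ∈ Finset.range (n + 1), φ k
          (Submodule.orthogonalProjectionOnto (LinearMap.ker (ContinuousLinearMap.adjoint T : H →ₗ[ℂ] H))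
            ((L ^ (n - k)) f))) :
    A * T = T * A := by
  set E := LinearMap.ker (ContinuousLinearMap.adjoint T : H →ₗ[ℂ] H) with hE
  haveI : CompleteSpace E := (ContinuousLinearMap.isClosed_ker _).completeSpace_coe
  -- range of T is orthogonal to E
  have hTmem : ∀ x : H, T x ∈ Eᗮ := by
    intro x
    rw [Submodule.mem_orthogonal]
    intro u hu
    have hu' : ContinuousLinearMap.adjoint T u = 0 := hu
    rw [← ContinuousLinearMap.adjoint_inner_left, hu', inner_zero_left]
  have hPT : ∀ x : H, Submodule.orthogonalProjectionOnto E (T x) = 0 := fun x =>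
    Submodule.orthogonalProjectionOnto_apply_of_mem_orthogonal (hTmem x)
  -- L T = 1
  have hLT1 : L * T = 1 := by rw [hL, mul_assoc]; exact hS1
  have hLT : ∀ x : H, L (T x) = x := by
    intro x
    have := ContinuousLinearMap.ext_iff.mp hLT1 x
    simpa [ContinuousLinearMap.mul_apply] using this
  -- if the zeroth coefficient vanishes, g = T (L g)
  have hrec : ∀ g : H, Submodule.orthogonalProjectionOnto E g = 0 → g = T (L g) := by
    intro g hg
    have h1 : g ∈ Eᗮ := by
      have h := Submodule.sub_starProjection_mem_orthogonal (K := E) g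
      simp [Submodule.starProjection, hg] at h; simpa using h
    have h2 : g - T (L g) ∈ E := by
      have hadj : (ContinuousLinearMap.adjoint T) (T (L g)) =
          ContinuousLinearMap.adjoint T g := by
        rw [hL]
        have := ContinuousLinearMap.ext_iff.mp hS2 (ContinuousLinearMap.adjoint T g)
        simpa [ContinuousLinearMap.mul_apply] using this
      show (ContinuousLinearMap.adjoint T) (g - T (L g)) = 0
      rw [map_sub, hadj, sub_self]
    have h3 : g - T (L g) ∈ Eᗮ := Submodule.sub_mem _ h1 (hTmem _)
    have h4 : g - T (L g) = 0 := by
      have := (Submodule.mem_orthogonal E _).mp h3 _ h2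
      exact inner_self_eq_zero.mp this
    exact sub_eq_zero.mp h4
  -- a vector all of whose coefficients vanish is zero (by analyticity)
  have hzero : ∀ g : H, (∀ n : ℕ, Submodule.orthogonalProjectionOnto E ((L ^ n) g) = 0) → g = 0 := by
    intro g hg
    have key : ∀ n : ℕ, g = (T ^ n) ((L ^ n) g) := by
      intro n
      induction n with
      | zero => simp
      | succ m ih =>
        have h0 : (L ^ m) g = T (L ((L ^ m) g)) := hrec _ (hg m)
        calc g = (T ^ m) ((L ^ m) g) := ih
          _ = (T ^ m) (T (L ((L ^ m) g))) := by rw [← h0]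
          _ = (T ^ (m + 1)) ((L ^ (m + 1)) g) := by
              rw [pow_succ T, pow_succ' L]
              simp [ContinuousLinearMap.mul_apply]
    have hmem : g ∈ (⨅ n : ℕ, LinearMap.range ((T ^ n : H →L[ℂ] H) : H →ₗ[ℂ] H)) := by
      rw [Submodule.mem_iInf]
      intro n
      exact ⟨(L ^ n) g, (key n).symm⟩
    rw [hanalytic] at hmem
    simpa using hmem
  -- main computation
  ext f
  rw [ContinuousLinearMap.mul_apply, ContinuousLinearMap.mul_apply, ← sub_eq_zero]
  apply hzero
  intro n
  have hsub : Submodule.orthogonalProjectionOnto E ((L ^ n) (A (T f) - T (A f))) =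
      Submodule.orthogonalProjectionOnto E ((L ^ n) (A (T f))) -
        Submodule.orthogonalProjectionOnto E ((L ^ n) (T (A f))) := by
    rw [map_sub, map_sub]
  rw [hsub, sub_eq_zero]
  cases n with
  | zero =>
    have h1 := hA (T f) 0
    simp only [pow_zero, ContinuousLinearMap.one_apply] at h1 ⊢
    rw [h1]
    simp [hPT]
    erw [Submodule.orthogonalProjectionOnto_apply_of_mem_orthogonal (hTmem f), map_zero]
  | succ m =>
    have hR : (L ^ (m + 1)) (T (A f)) = (L ^ m) (A f) := by
      rw [pow_succ]
      simp [ContinuousLinearMap.mul_apply, hLT]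
    rw [hR, hA (T f) (m + 1), hA f m, Finset.sum_range_succ]
    have hlast : Submodule.orthogonalProjectionOnto E ((L ^ (m + 1 - (m + 1))) (T f)) = 0 := by
      simp [hPT]
    rw [hlast, map_zero, add_zero]
    apply Finset.sum_congr rfl
    intro k hk
    have hk' : k ≤ m := Nat.lt_succ_iff.mp (Finset.mem_range.mp hk)
    have hmk : m + 1 - k = (m - k) + 1 := by omega
    rw [hmk, pow_succ]
    simp [ContinuousLinearMap.mul_apply, hLT]
end

section
/- Let T be a bounded, left-invertible and analytic operator on a complex Hilbert space H, E = ker T*, P_E the orthogonal projection onto E, L = (T*T)⁻¹T*. If the bounded operator A on H is a multiplication operator with symbol φ : ℕ → B(E) and the bounded operator B is a multiplication operator with symbol ψ : ℕ → B(E), then AB is a multiplication operator with symbol φ*ψ, where (φ*ψ)(k) = Σ_{j=0}^{k} φ(j)ψ(k−j). -/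
/-- Let `T` be bounded, left-invertible and analytic on a complex Hilbert
space `H`, `E = ker T*`, `L = (T*T)⁻¹T*`.  If `A` is a multiplication operator with symbol
`φ` and `B` is a multiplication operator with symbol `ψ`, then `AB` is a multiplication
operator with symbol `φ*ψ`, the Cauchy product `(φ*ψ)(k) = Σ_{j=0}^{k} φ(j)ψ(k−j)`. -/
theorem stmt_3
    {H : Type*} [NormedAddCommGroup H] [InnerProductSpace ℂ H] [CompleteSpace H]
    (T S : H →L[ℂ] H)
    (hbelow : ∃ α : ℝ, 0 < α ∧ ∀ f : H, α * ‖f‖ ^ 2 ≤ ‖T f‖ ^ 2)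
    (hanalytic : (⨅ n : ℕ, LinearMap.range ((T ^ n : H →L[ℂ] H) : H →ₗ[ℂ] H)) = ⊥)
    (hS1 : S * (ContinuousLinearMap.adjoint T * T) = 1)
    (hS2 : (ContinuousLinearMap.adjoint T * T) * S = 1)
    (L : H →L[ℂ] H) (hL : L = S * ContinuousLinearMap.adjoint T)
    (A B : H →L[ℂ] H)
    (φ ψ : ℕ → (LinearMap.ker (ContinuousLinearMap.adjoint T : H →ₗ[ℂ] H) →L[ℂ]
      LinearMap.ker (ContinuousLinearMap.adjoint T : H →ₗ[ℂ] H)))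
    (hA : ∀ (f : H) (n : ℕ),
      Submodule.orthogonalProjectionOnto (LinearMap.ker (ContinuousLinearMap.adjoint T : H →ₗ[ℂ] H)) ((L ^ n) (A f)) =
        ∑ k ∈ Finset.range (n + 1), φ k
          (Submodule.orthogonalProjectionOnto (LinearMap.ker (ContinuousLinearMap.adjoint T : H →ₗ[ℂ] H))
            ((L ^ (n - k)) f)))
    (hB : ∀ (f : H) (n : ℕ),
      Submodule.orthogonalProjectionOnto (LinearMap.ker (ContinuousLinearMap.adjoint T : H →ₗ[ℂ] H)) ((L ^ n) (B f)) =
        ∑ k ∈ Finset.range (n + 1), ψ k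
          (Submodule.orthogonalProjectionOnto (LinearMap.ker (ContinuousLinearMap.adjoint T : H →ₗ[ℂ] H))
            ((L ^ (n - k)) f))) :
    ∀ (f : H) (n : ℕ),
      Submodule.orthogonalProjectionOnto (LinearMap.ker (ContinuousLinearMap.adjoint T : H →ₗ[ℂ] H))
          ((L ^ n) ((A * B) f)) =
        ∑ k ∈ Finset.range (n + 1),
          (∑ j ∈ Finset.range (k + 1), φ j ∘L ψ (k - j))
            (Submodule.orthogonalProjectionOnto (LinearMap.ker (ContinuousLinearMap.adjoint T : H →ₗ[ℂ] H))
              ((L ^ (n - k)) f)) := by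
  intro f n
  have key : (L ^ n) ((A * B) f) = (L ^ n) (A (B f)) := rfl
  rw [key, hA (B f) n]
  have hBrw : ∀ k ∈ Finset.range (n + 1),
      φ k (Submodule.orthogonalProjectionOnto (LinearMap.ker (ContinuousLinearMap.adjoint T : H →ₗ[ℂ] H))
        ((L ^ (n - k)) (B f))) =
      ∑ j ∈ Finset.range ((n - k) + 1),
        φ k (ψ j (Submodule.orthogonalProjectionOnto (LinearMap.ker (ContinuousLinearMap.adjoint T : H →ₗ[ℂ] H))
          ((L ^ (n - k - j)) f))) := by
    intro k _
    rw [hB f (n - k), map_sum]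
  rw [Finset.sum_congr rfl hBrw]
  simp only [ContinuousLinearMap.sum_apply, ContinuousLinearMap.comp_apply]
  rw [Finset.sum_sigma', Finset.sum_sigma']
  refine Finset.sum_bij' (fun p _ => ⟨p.1 + p.2, p.1⟩)
    (fun p _ => ⟨p.2, p.1 - p.2⟩) ?_ ?_ ?_ ?_ ?_
  · rintro ⟨k, j⟩ hp
    simp only [Finset.mem_sigma, Finset.mem_range] at hp ⊢
    omega
  · rintro ⟨m, a⟩ hp
    simp only [Finset.mem_sigma, Finset.mem_range] at hp ⊢
    omega
  · rintro ⟨k, j⟩ hp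
    simp only [Finset.mem_sigma, Finset.mem_range] at hp
    simp only [Sigma.mk.inj_iff, heq_eq_eq]
    exact ⟨trivial, by omega⟩
  · rintro ⟨m, a⟩ hp
    simp only [Finset.mem_sigma, Finset.mem_range] at hp
    simp only [Sigma.mk.inj_iff, heq_eq_eq]
    exact ⟨by omega, trivial⟩
  · rintro ⟨k, j⟩ hp
    simp only [Finset.mem_sigma, Finset.mem_range] at hp
    have h1 : k + j - k = j := by omega
    have h2 : n - k - j = n - (k + j) := by omega
    rw [h1, h2]
end

section
/- Let T be a bounded, left-invertible and analytic operator on a complex Hilbert space H, E = ker T*, P_E the orthogonal projection onto E, L = (T*T)⁻¹T*. If a bounded operator A on H commutes with T (AT = TA), then A is a multiplication operator with symbol φ_A given by φ_A(m) = P_E L^m A|_E ∈ B(E); explicitly, for every f ∈ H and every n ∈ ℕ: P_E L^n(A f) = Σ_{k=0}^{n} P_E L^k A P_E L^{n−k} f. -/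
/-- Let `T` be bounded, left-invertible and analytic on a complex Hilbert
space `H`, `E = ker T*`, `P_E` the orthogonal projection onto `E`, `L = (T*T)⁻¹T*`.  If a
bounded operator `A` on `H` commutes with `T`, then `A` is a multiplication operator with
symbol `φ_A(m) = P_E L^m A|_E`; explicitly, for every `f ∈ H` and every `n ∈ ℕ`:
`P_E L^n (A f) = Σ_{k=0}^{n} P_E L^k A P_E L^{n−k} f`. -/
theorem stmt_4
    {H : Type*} [NormedAddCommGroup H] [InnerProductSpace ℂ H] [CompleteSpace H]
    (T S : H →L[ℂ] H)
    (hbelow : ∃ α : ℝ, 0 < α ∧ ∀ f : H, α * ‖f‖ ^ 2 ≤ ‖T f‖ ^ 2)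
    (hanalytic : (⨅ n : ℕ, LinearMap.range ((T ^ n : H →L[ℂ] H) : H →ₗ[ℂ] H)) = ⊥)
    (hS1 : S * (ContinuousLinearMap.adjoint T * T) = 1)
    (hS2 : (ContinuousLinearMap.adjoint T * T) * S = 1)
    (L : H →L[ℂ] H) (hL : L = S * ContinuousLinearMap.adjoint T)
    (A : H →L[ℂ] H) (hcomm : A * T = T * A) :
    ∀ (f : H) (n : ℕ),
      Submodule.orthogonalProjectionOnto (LinearMap.ker (ContinuousLinearMap.adjoint T : H →ₗ[ℂ] H)) ((L ^ n) (A f)) =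
        ∑ k ∈ Finset.range (n + 1),
          Submodule.orthogonalProjectionOnto (LinearMap.ker (ContinuousLinearMap.adjoint T : H →ₗ[ℂ] H))
            ((L ^ k) (A (↑(Submodule.orthogonalProjectionOnto (LinearMap.ker (ContinuousLinearMap.adjoint T : H →ₗ[ℂ] H))
              ((L ^ (n - k)) f))))) := by
  intro f n
  set T' := ContinuousLinearMap.adjoint T with hT'
  set K := LinearMap.ker (T' : H →ₗ[ℂ] H) with hK
  set P : H →L[ℂ] H := 1 - T * L with hPdef
  have hLT : L * T = 1 := by rw [hL, mul_assoc]; exact hS1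
  have hPT : P * T = 0 := by
    rw [hPdef, sub_mul, one_mul, mul_assoc, hLT, mul_one, sub_self]
  have hproj : ∀ x : H, ((Submodule.orthogonalProjectionOnto K x : H)) = P x := by
    intro x
    show K.starProjection x = P x
    apply Submodule.eq_starProjection_of_mem_of_inner_eq_zero
    · -- P x ∈ K
      have : T' (P x) = 0 := by
        have h2 : (T' * T * S) (T' x) = T' x := by rw [hS2]; simp
        simp only [hPdef, hL] at *
        simp only [ContinuousLinearMap.sub_apply, ContinuousLinearMap.one_apply,
          ContinuousLinearMap.mul_apply, map_sub] at *
        rw [h2]; simp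
      simpa [hK, LinearMap.mem_ker] using this
    · intro w hw
      have hw' : T' w = 0 := hw
      have : x - P x = T (L x) := by simp [hPdef]
      rw [this, ← ContinuousLinearMap.adjoint_inner_right T, hw', inner_zero_right]
  -- reduce to an identity in H
  apply Subtype.ext
  push_cast
  simp only [← FunLike.coe_pow_eq_iterate]
  rw [hproj]
  have hcoe : ∀ k, ((Submodule.orthogonalProjectionOnto K ((L ^ k) f) : H)) = P ((L ^ k) f) := fun k => hproj _
  calc P ((L ^ n) (A f))
      = ∑ k ∈ Finset.range (n + 1),
          ((Submodule.orthogonalProjectionOnto K ((L ^ k) (A ((Submodule.orthogonalProjectionOnto K ((L ^ (n - k)) f) : H)))) : H)) := by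
        -- rewrite each summand using hproj twice
        have key : ∀ k ∈ Finset.range (n + 1),
            ((Submodule.orthogonalProjectionOnto K ((L ^ k) (A ((Submodule.orthogonalProjectionOnto K ((L ^ (n - k)) f) : H)))) : H))
              = P ((L ^ k) (A (P ((L ^ (n - k)) f)))) := by
          intro k _; rw [hproj, hproj]
        rw [Finset.sum_congr rfl key]
        -- now pure operator computation
        set g : ℕ → H := fun j => P ((L ^ j) (A ((L ^ (n - j)) f))) with hg
        have hterm : ∀ k ∈ Finset.range (n + 1),
            P ((L ^ k) (A (P ((L ^ (n - k)) f))))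
              = g k - (if k = 0 then 0 else g (k - 1)) := by
          intro k hk
          have hk' : k ≤ n := Nat.lt_succ_iff.mp (Finset.mem_range.mp hk)
          have hAP : A (P ((L ^ (n - k)) f))
              = A ((L ^ (n - k)) f) - T (A (L ((L ^ (n - k)) f))) := by
            have h1 : A (T (L ((L ^ (n - k)) f))) = T (A (L ((L ^ (n - k)) f))) := by
              have := congrArg (fun B : H →L[ℂ] H => B (L ((L ^ (n - k)) f))) hcomm
              simpa using this
            simpa [hPdef] using h1
          rw [hAP, map_sub, map_sub]
          rcases Nat.eq_zero_or_pos k with hk0 | hk0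
          · subst hk0
            have hPT' : P (T (A (L ((L ^ n) f)))) = 0 := by
              have := congrArg (fun B : H →L[ℂ] H => B (A (L ((L ^ n) f)))) hPT
              simpa using this
            simpa [g] using hPT'
          · obtain ⟨j, rfl⟩ : ∃ j, k = j + 1 := ⟨k - 1, (Nat.succ_pred_eq_of_pos hk0).symm⟩
            have hLsucc : ∀ y : H, (L ^ (j + 1)) (T y) = (L ^ j) y := by
              intro y
              have : L ^ (j + 1) * T = L ^ j := by
                rw [pow_succ, mul_assoc, hLT, mul_one]
              have := congrArg (fun B : H →L[ℂ] H => B y) this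
              simpa using this
            have hLpow : L ((L ^ (n - (j+1))) f) = (L ^ (n - j)) f := by
              have : n - j = (n - (j + 1)) + 1 := by omega
              rw [this, pow_succ']
              rfl
            simp only [hLpow, hLsucc, g]
            simp
        rw [Finset.sum_congr rfl hterm]
        have htel : ∑ k ∈ Finset.range (n + 1), (g k - (if k = 0 then 0 else g (k - 1))) = g n := by
          rw [Finset.sum_range_succ']
          have h1 : ∀ i ∈ Finset.range n,
              (g (i + 1) - (if i + 1 = 0 then 0 else g (i + 1 - 1))) = g (i + 1) - g i := by
            intro i _; simp
          rw [Finset.sum_congr rfl h1, Finset.sum_range_sub g n]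
          simp
        rw [htel]
        simp [g]
  _ = _ := rfl
end

section
/- Let T be a bounded left-invertible operator on a complex Hilbert space H, E = ker T*, L = (T*T)⁻¹T*, r(L) the spectral radius of L. For every e ∈ E and every λ ∈ ℂ with |λ|·r(L) < 1, the series h_{λ,e} := Σ_{n≥0} λ^n (L*)^n e converges in H and T* h_{λ,e} = λ·h_{λ,e}. Moreover, if T is analytic and H ≠ {0}, then every λ ∈ ℂ with |λ|·r(L) < 1 is an eigenvalue of T*. -/
open Filter ContinuousLinearMap

local notation "⟪" x ", " y "⟫" => @inner ℂ _ _ x y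

/-- Summability of `‖lam‖^n * ‖a^n‖` when `‖lam‖ * r(a) < 1`. -/
lemma aux_summable {A : Type*} [NormedRing A] [NormedAlgebra ℂ A] [CompleteSpace A]
    (a : A) (lam : ℂ) (h : (‖lam‖₊ : ENNReal) * spectralRadius ℂ a < 1) :
    Summable fun n : ℕ => ‖lam‖ ^ n * ‖a ^ n‖ := by
  rcases eq_or_ne lam 0 with rfl | hlam
  · apply summable_of_ne_finset_zero (s := ({0} : Finset ℕ))
    intro n hn
    have hn0 : n ≠ 0 := by simpa using hn
    simp [zero_pow hn0]
  · have hc0 : (‖lam‖₊ : ENNReal) ≠ 0 := by simpa using hlam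
    have hct : (‖lam‖₊ : ENNReal) ≠ ⊤ := ENNReal.coe_ne_top
    have hr : spectralRadius ℂ a < (‖lam‖₊ : ENNReal)⁻¹ := by
      have h2 := (ENNReal.mul_lt_mul_iff_right (a := (‖lam‖₊ : ENNReal)⁻¹)
        (ENNReal.inv_ne_zero.mpr hct) (ENNReal.inv_ne_top.mpr hc0)).mpr h
      rwa [← mul_assoc, ENNReal.inv_mul_cancel hc0 hct, one_mul, mul_one] at h2
    obtain ⟨ρ, hρ₁, hρ₂⟩ := ENNReal.lt_iff_exists_nnreal_btwn.mp hr
    have hρ1 : ‖lam‖ * (ρ : ℝ) < 1 := by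
      have h3 : (‖lam‖₊ : ENNReal) * ρ < 1 := by
        calc (‖lam‖₊ : ENNReal) * ρ < ‖lam‖₊ * (‖lam‖₊ : ENNReal)⁻¹ :=
              (ENNReal.mul_lt_mul_iff_right hc0 hct).mpr hρ₂
          _ = 1 := ENNReal.mul_inv_cancel hc0 hct
      rw [← ENNReal.coe_mul, ← ENNReal.coe_one, ENNReal.coe_lt_coe] at h3
      exact_mod_cast h3
    have hev : ∀ᶠ n : ℕ in atTop, (‖a ^ n‖₊ : ENNReal) ^ (1 / (n : ℝ)) < (ρ : ENNReal) :=
      (spectrum.pow_nnnorm_pow_one_div_tendsto_nhds_spectralRadius a).eventually_lt_const hρ₁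
    have hev2 : ∀ᶠ n : ℕ in atTop, ‖lam‖ ^ n * ‖a ^ n‖ ≤ (‖lam‖ * ρ) ^ n := by
      filter_upwards [hev, eventually_ge_atTop 1] with n hn hn1
      have hnne : (n : ℝ) ≠ 0 := by positivity
      have hlt : (‖a ^ n‖₊ : ENNReal) < (ρ : ENNReal) ^ n := by
        have h2 := ENNReal.rpow_lt_rpow hn (by positivity : (0 : ℝ) < (n : ℝ))
        rwa [← ENNReal.rpow_mul, one_div, inv_mul_cancel₀ hnne, ENNReal.rpow_one,
          ENNReal.rpow_natCast] at h2
      have hxn : ‖a ^ n‖ ≤ (ρ : ℝ) ^ n := by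
        have h4 := hlt.le
        rw [← ENNReal.coe_pow, ENNReal.coe_le_coe] at h4
        exact_mod_cast h4
      calc ‖lam‖ ^ n * ‖a ^ n‖ ≤ ‖lam‖ ^ n * (ρ : ℝ) ^ n := by
            exact mul_le_mul_of_nonneg_left hxn (pow_nonneg (norm_nonneg _) n)
        _ = (‖lam‖ * ρ) ^ n := (mul_pow _ _ _).symm
    refine Summable.of_norm_bounded_eventually_nat
      (summable_geometric_of_lt_one (by positivity) hρ1) ?_
    filter_upwards [hev2] with n hn
    rwa [Real.norm_of_nonneg (by positivity)]

lemma aux_main {H : Type*} [NormedAddCommGroup H] [InnerProductSpace ℂ H] [CompleteSpace H]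
    (T L : H →L[ℂ] H) (hLT : L * T = 1)
    (e : H) (he : ContinuousLinearMap.adjoint T e = 0)
    (lam : ℂ) (hlam : (‖lam‖₊ : ENNReal) * spectralRadius ℂ L < 1) :
    Summable (fun n : ℕ => lam ^ n • (ContinuousLinearMap.adjoint L ^ n) e) ∧
    ContinuousLinearMap.adjoint T
        (∑' n : ℕ, lam ^ n • (ContinuousLinearMap.adjoint L ^ n) e) =
      lam • ∑' n : ℕ, lam ^ n • (ContinuousLinearMap.adjoint L ^ n) e := by
  set A := ContinuousLinearMap.adjoint T with hA
  set B := ContinuousLinearMap.adjoint L with hB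
  have hBpow : ∀ n : ℕ, B ^ n = ContinuousLinearMap.adjoint (L ^ n) := by
    intro n
    rw [hB, ← ContinuousLinearMap.star_eq_adjoint, ← ContinuousLinearMap.star_eq_adjoint,
      ← star_pow]
  have hnormB : ∀ n : ℕ, ‖B ^ n‖ = ‖L ^ n‖ := by
    intro n
    rw [hBpow]
    exact LinearIsometryEquiv.norm_map _ _
  have hsum : Summable (fun n : ℕ => lam ^ n • (B ^ n) e) := by
    refine Summable.of_norm_bounded ((aux_summable L lam hlam).mul_right ‖e‖) ?_
    intro n
    rw [norm_smul, norm_pow]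
    calc ‖lam‖ ^ n * ‖(B ^ n) e‖ ≤ ‖lam‖ ^ n * (‖B ^ n‖ * ‖e‖) := by
          exact mul_le_mul_of_nonneg_left ((B ^ n).le_opNorm e)
            (pow_nonneg (norm_nonneg _) n)
      _ = ‖lam‖ ^ n * ‖L ^ n‖ * ‖e‖ := by rw [hnormB]; ring
  have hAB : A * B = 1 := by
    have h1 := congrArg ContinuousLinearMap.adjoint hLT
    rw [show L * T = L.comp T from rfl, ContinuousLinearMap.adjoint_comp] at h1
    calc A * B = (ContinuousLinearMap.adjoint T).comp (ContinuousLinearMap.adjoint L) := rfl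
      _ = ContinuousLinearMap.adjoint 1 := h1
      _ = 1 := by
          rw [← ContinuousLinearMap.star_eq_adjoint]
          exact star_one _
  have hterm : ∀ n : ℕ, A ((B ^ (n + 1)) e) = (B ^ n) e := by
    intro n
    have hcomp : A * B ^ (n + 1) = B ^ n := by
      rw [pow_succ', ← mul_assoc, hAB, one_mul]
    calc A ((B ^ (n + 1)) e) = (A * B ^ (n + 1)) e := rfl
      _ = (B ^ n) e := by rw [hcomp]
  refine ⟨hsum, ?_⟩
  rw [A.map_tsum hsum]
  have hsum2 : Summable fun n : ℕ => A (lam ^ n • (B ^ n) e) := hsum.map A A.continuous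
  have hfun : (fun n : ℕ => A (lam ^ n • (B ^ n) e)) =
      fun n : ℕ => lam ^ n • A ((B ^ n) e) := by
    funext n; exact A.map_smul _ _
  rw [hfun] at hsum2 ⊢
  rw [Summable.tsum_eq_zero_add hsum2]
  have h0 : lam ^ 0 • A ((B ^ 0) e) = 0 := by
    simp [he]
  have hsucc : ∀ n : ℕ, lam ^ (n + 1) • A ((B ^ (n + 1)) e) =
      lam • (lam ^ n • (B ^ n) e) := by
    intro n
    rw [hterm n, pow_succ', mul_smul]
  rw [h0, zero_add]
  simp_rw [hsucc]
  exact (hsum.hasSum.const_smul lam).tsum_eq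

set_option maxHeartbeats 1000000 in
/-- Let `T` be bounded and left-invertible on a complex Hilbert space `H`,
`E = ker T*`, `L = (T*T)⁻¹T*`, `r(L)` the spectral radius of `L`.  For every `e ∈ E` and
`λ` with `|λ|·r(L) < 1`, the series `h_{λ,e} = Σ λ^n (L*)^n e` converges in `H` and
`T* h_{λ,e} = λ·h_{λ,e}`.  Moreover, if `T` is analytic and `H ≠ {0}`, then every such `λ`
is an eigenvalue of `T*`. -/
theorem stmt_6
    {H : Type*} [NormedAddCommGroup H] [InnerProductSpace ℂ H] [CompleteSpace H]
    (T S : H →L[ℂ] H)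
    (hbelow : ∃ α : ℝ, 0 < α ∧ ∀ f : H, α * ‖f‖ ^ 2 ≤ ‖T f‖ ^ 2)
    (hS1 : S * (ContinuousLinearMap.adjoint T * T) = 1)
    (hS2 : (ContinuousLinearMap.adjoint T * T) * S = 1)
    (L : H →L[ℂ] H) (hL : L = S * ContinuousLinearMap.adjoint T) :
    (∀ e ∈ LinearMap.ker ((ContinuousLinearMap.adjoint T : H →L[ℂ] H) : H →ₗ[ℂ] H),
      ∀ lam : ℂ, (‖lam‖₊ : ENNReal) * spectralRadius ℂ L < 1 →
        Summable (fun n : ℕ => lam ^ n • (ContinuousLinearMap.adjoint L ^ n) e) ∧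
        ContinuousLinearMap.adjoint T
            (∑' n : ℕ, lam ^ n • (ContinuousLinearMap.adjoint L ^ n) e) =
          lam • ∑' n : ℕ, lam ^ n • (ContinuousLinearMap.adjoint L ^ n) e) ∧
    (((⨅ n : ℕ, LinearMap.range ((T ^ n : H →L[ℂ] H) : H →ₗ[ℂ] H)) = ⊥) → Nontrivial H →
      ∀ lam : ℂ, (‖lam‖₊ : ENNReal) * spectralRadius ℂ L < 1 →
        ∃ h : H, h ≠ 0 ∧ ContinuousLinearMap.adjoint T h = lam • h) := by
  have hLT : L * T = 1 := by
    rw [hL, mul_assoc, hS1]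
  constructor
  · intro e he lam hlam
    exact aux_main T L hLT e (LinearMap.mem_ker.mp he) lam hlam
  · intro hanal hnt lam hlam
    set A := ContinuousLinearMap.adjoint T with hA
    -- first: ker A ≠ ⊥
    have hker : LinearMap.ker (A : H →ₗ[ℂ] H) ≠ ⊥ := by
      intro hk
      have hsurj : Function.Surjective T := by
        intro h
        refine ⟨S (A h), ?_⟩
        have h2 : A (T (S (A h))) = A h := by
          have h3 := ContinuousLinearMap.ext_iff.mp hS2 (A h)
          simpa [ContinuousLinearMap.mul_apply] using h3
        have h3 : h - T (S (A h)) ∈ LinearMap.ker (A : H →ₗ[ℂ] H) := by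
          simp [LinearMap.mem_ker, map_sub, h2]
        rw [hk, Submodule.mem_bot, sub_eq_zero] at h3
        exact h3.symm
      have hsurjn : ∀ n : ℕ, Function.Surjective (T ^ n) := by
        intro n
        induction n with
        | zero => simpa [pow_zero] using Function.surjective_id
        | succ n ih =>
          rw [pow_succ]
          intro x
          obtain ⟨y, hy⟩ := ih x
          obtain ⟨z, hz⟩ := hsurj y
          exact ⟨z, by simp [ContinuousLinearMap.mul_apply, hz, hy]⟩
      have hrange : ∀ n : ℕ, LinearMap.range ((T ^ n : H →L[ℂ] H) : H →ₗ[ℂ] H) = ⊤ := by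
        intro n
        exact LinearMap.range_eq_top.mpr (hsurjn n)
      rw [show (⨅ n : ℕ, LinearMap.range ((T ^ n : H →L[ℂ] H) : H →ₗ[ℂ] H)) = ⊤ by simp only [hrange, iInf_top]] at hanal
      obtain ⟨x, hx⟩ := exists_ne (0 : H)
      have hxmem : x ∈ (⊥ : Submodule ℂ H) := hanal ▸ Submodule.mem_top
      exact hx (Submodule.mem_bot ℂ |>.mp hxmem)
    obtain ⟨e, heker, he0⟩ := (Submodule.ne_bot_iff _).mp hker
    have he : A e = 0 := LinearMap.mem_ker.mp heker
    obtain ⟨hsum, heig⟩ := aux_main T L hLT e he lam hlam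
    set B := ContinuousLinearMap.adjoint L with hB
    set h := ∑' n : ℕ, lam ^ n • (B ^ n) e with hh
    refine ⟨h, ?_, heig⟩
    -- h ≠ 0 because ⟪e, h⟫ = ‖e‖²
    have hLe : L e = 0 := by
      rw [hL]
      simp [ContinuousLinearMap.mul_apply, he]
    have hLn : ∀ n : ℕ, n ≠ 0 → (L ^ n) e = 0 := by
      intro n hn
      obtain ⟨m, rfl⟩ : ∃ m, n = m + 1 := ⟨n - 1, by omega⟩
      rw [pow_succ, ContinuousLinearMap.mul_apply, hLe, map_zero]
    have hBpow : ∀ n : ℕ, B ^ n = ContinuousLinearMap.adjoint (L ^ n) := by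
      intro n
      rw [hB, ← ContinuousLinearMap.star_eq_adjoint, ← ContinuousLinearMap.star_eq_adjoint,
        ← star_pow]
    have hinner : ⟪e, h⟫ = (‖e‖ : ℂ) ^ 2 := by
      have h1 : ⟪e, h⟫ = ∑' n : ℕ, ⟪e, lam ^ n • (B ^ n) e⟫ := by
        rw [hh]
        exact ContinuousLinearMap.map_tsum (innerSL ℂ e) hsum
      rw [h1, tsum_eq_single 0]
      · simp [inner_self_eq_norm_sq_to_K]
      · intro n hn
        rw [inner_smul_right, hBpow n, ContinuousLinearMap.adjoint_inner_right, hLn n hn]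
        simp
    intro hcontra
    rw [hcontra, inner_zero_right] at hinner
    have : (‖e‖ : ℂ) ^ 2 ≠ 0 := by
      simp only [ne_eq, pow_eq_zero_iff, OfNat.ofNat_ne_zero, not_false_eq_true]
      exact_mod_cast norm_ne_zero_iff.mpr he0
    exact this hinner.symm
end

section
/- Let S_λ be a bounded left-invertible weighted shift with positive weights on a countably infinite rooted leafless directed tree with vertex set V. Then there exists an orthonormal basis {e'_j}_{j∈J} of ker S_λ* and natural numbers (k_j)_{j∈J} such that e'_j ∈ ℓ²(V_{k_j}) for every j ∈ J (a 'separated' basis: each basis vector is supported on a single generation). -/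
open scoped InnerProductSpace ENNReal

set_option maxHeartbeats 1000000
set_option synthInstance.maxHeartbeats 400000

/-- A countably infinite rooted directed tree, encoded by a root, a parent map and a depth
function. -/
structure RootedDirectedTree (V : Type*) where
  root : V
  par : V → V
  depth : V → ℕ
  depth_eq_zero_iff : ∀ v, depth v = 0 ↔ v = root
  par_root : par root = root
  depth_par : ∀ v, v ≠ root → depth (par v) = depth v - 1

/-- A rooted directed tree is leafless if every vertex has a child. -/
def RootedDirectedTree.Leafless {V : Type*} (t : RootedDirectedTree V) : Prop :=
  ∀ v, ∃ u, t.par u = v ∧ t.depth u = t.depth v + 1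

section Aux

variable {V : Type}

private lemma stmt7_rpow_two (x : ℝ) : x ^ (2 : ℝ≥0∞).toReal = x ^ 2 := by
  rw [ENNReal.toReal_ofNat, show (2:ℝ) = ((2:ℕ):ℝ) by norm_num, Real.rpow_natCast]

private lemma stmt7_memℓp_trunc (p : V → Prop) [DecidablePred p] (f : lp (fun _ : V => ℂ) 2) :
    Memℓp (fun v => if p v then f v else 0) 2 := by
  have hp2 : (0:ℝ) < (2 : ℝ≥0∞).toReal := by norm_num
  apply memℓp_gen
  refine Summable.of_nonneg_of_le (fun v => ?_) (fun v => ?_) ((lp.memℓp f).summable hp2)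
  · rw [stmt7_rpow_two]; positivity
  · by_cases h : p v
    · simp [h]
    · simp only [h, if_false, norm_zero, stmt7_rpow_two]
      norm_num

private noncomputable def stmt7_trunc (p : V → Prop) [DecidablePred p]
    (f : lp (fun _ : V => ℂ) 2) : lp (fun _ : V => ℂ) 2 :=
  ⟨fun v => if p v then f v else 0, stmt7_memℓp_trunc p f⟩

private lemma stmt7_trunc_apply (p : V → Prop) [DecidablePred p]
    (f : lp (fun _ : V => ℂ) 2) (v : V) :
    stmt7_trunc p f v = if p v then f v else 0 := rfl

end Aux

/-- Let `S_λ` be a bounded left-invertible weighted shift with positive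
weights on a countably infinite rooted leafless directed tree with vertex set `V`.  Then
there is an orthonormal basis `{e'_j}_{j∈J}` of `ker S_λ*` and natural numbers `(k_j)` such
that each `e'_j` is supported on the single generation `V_{k_j}`. -/
theorem stmt_7 {V : Type} [Countable V] [Infinite V] [DecidableEq V]
    (t : RootedDirectedTree V) (hleafless : t.Leafless)
    (lam : V → ℝ) (hlam : ∀ v, v ≠ t.root → 0 < lam v)
    (Sl : lp (fun _ : V => ℂ) 2 →L[ℂ] lp (fun _ : V => ℂ) 2)
    (hSl : ∀ (f : lp (fun _ : V => ℂ) 2) (v : V),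
      Sl f v = if v = t.root then 0 else (lam v : ℂ) * f (t.par v))
    (hbelow : ∃ α : ℝ, 0 < α ∧ ∀ f : lp (fun _ : V => ℂ) 2, α * ‖f‖ ^ 2 ≤ ‖Sl f‖ ^ 2) :
    ∃ (J : Type) (b : J → lp (fun _ : V => ℂ) 2) (k : J → ℕ),
      Orthonormal ℂ b ∧
      (∀ j, b j ∈ LinearMap.ker (ContinuousLinearMap.adjoint Sl : lp (fun _ : V => ℂ) 2 →ₗ[ℂ] lp (fun _ : V => ℂ) 2)) ∧
      (∀ (j : J) (u : V), t.depth u ≠ k j → b j u = 0) ∧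
      (LinearMap.ker (ContinuousLinearMap.adjoint Sl : lp (fun _ : V => ℂ) 2 →ₗ[ℂ] lp (fun _ : V => ℂ) 2) : Set (lp (fun _ : V => ℂ) 2)) ⊆
        closure (Submodule.span ℂ (Set.range b) : Set (lp (fun _ : V => ℂ) 2)) := by
  classical
  set A := ContinuousLinearMap.adjoint Sl with hAdef
  -- evaluation at a point is continuous
  have hev : ∀ v : V, Continuous fun f : lp (fun _ : V => ℂ) 2 => f v := by
    intro v
    refine (LipschitzWith.of_dist_le_mul (K := 1) fun f g => ?_).continuous
    rw [dist_eq_norm, dist_eq_norm, NNReal.coe_one, one_mul]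
    calc ‖f v - g v‖ = ‖(f - g) v‖ := by rw [lp.coeFn_sub]; rfl
      _ ≤ ‖f - g‖ := lp.norm_apply_le_norm two_ne_zero _ v
  -- inner product of functions with disjoint support vanishes
  have hinner0 : ∀ f g : lp (fun _ : V => ℂ) 2, (∀ v, f v = 0 ∨ g v = 0) → ⟪f, g⟫_ℂ = 0 := by
    intro f g h
    rw [lp.inner_eq_tsum]
    convert tsum_zero with v
    rcases h v with h' | h' <;> simp [RCLike.inner_apply, h']
  -- formula for the adjoint
  have hA_apply : ∀ (f : lp (fun _ : V => ℂ) 2) (v : V),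
      A f v = ⟪Sl (lp.single 2 v (1:ℂ)), f⟫_ℂ := by
    intro f v
    have h1 : ⟪lp.single 2 v (1:ℂ), A f⟫_ℂ = A f v := by
      rw [lp.inner_single_left, RCLike.inner_apply]
      simp
    rw [← h1, hAdef, ContinuousLinearMap.adjoint_inner_right]
  -- support of `Sl` applied to a basis vector
  have hSsupp : ∀ v u : V, t.depth u ≠ t.depth v + 1 → Sl (lp.single 2 v (1:ℂ)) u = 0 := by
    intro v u hu
    rw [hSl]
    by_cases hroot : u = t.root
    · simp [hroot]
    · rw [if_neg hroot]
      have hpar : t.par u ≠ v := by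
        intro hp
        have h1 := t.depth_par u hroot
        have h2 : t.depth u ≠ 0 := fun h0 => hroot ((t.depth_eq_zero_iff u).1 h0)
        rw [hp] at h1
        omega
      rw [lp.single_apply_ne 2 v _ hpar, mul_zero]
  -- generation truncations stay in the kernel
  have htrunc_mem : ∀ (k : ℕ) (f : lp (fun _ : V => ℂ) 2), A f = 0 →
      A (stmt7_trunc (fun v => t.depth v = k) f) = 0 := by
    intro k f hf
    apply lp.ext
    funext v
    rw [lp.coeFn_zero, Pi.zero_apply]
    by_cases hk : k = t.depth v + 1
    · have heq : A (stmt7_trunc (fun v => t.depth v = k) f) v = A f v := by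
        rw [hA_apply, hA_apply]
        have hdiff : ⟪Sl (lp.single 2 v (1:ℂ)),
            f - stmt7_trunc (fun v => t.depth v = k) f⟫_ℂ = 0 := by
          apply hinner0
          intro u
          by_cases hu : t.depth u = k
          · right
            rw [lp.coeFn_sub, Pi.sub_apply, stmt7_trunc_apply, if_pos hu, sub_self]
          · left
            exact hSsupp v u (by omega)
        rw [inner_sub_right] at hdiff
        exact (sub_eq_zero.1 hdiff).symm
      rw [heq, hf, lp.coeFn_zero, Pi.zero_apply]
    · rw [hA_apply]
      apply hinner0
      intro u
      by_cases hu : t.depth u = k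
      · left; exact hSsupp v u (by omega)
      · right; rw [stmt7_trunc_apply, if_neg hu]
  -- the submodule of functions supported on generation `k`
  let Esub : ℕ → Submodule ℂ (lp (fun _ : V => ℂ) 2) := fun k =>
    { carrier := {f : lp (fun _ : V => ℂ) 2 | ∀ v, t.depth v ≠ k → f v = 0}
      add_mem' := fun {f} {g} hf hg v hv => by
        rw [lp.coeFn_add, Pi.add_apply, hf v hv, hg v hv, add_zero]
      zero_mem' := fun v hv => by rw [lp.coeFn_zero, Pi.zero_apply]
      smul_mem' := fun c f hf v hv => by
        rw [lp.coeFn_smul, Pi.smul_apply, hf v hv, smul_zero] }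
  have hEclosed : ∀ k, IsClosed (Esub k : Set (lp (fun _ : V => ℂ) 2)) := by
    intro k
    have hset : (Esub k : Set (lp (fun _ : V => ℂ) 2)) =
        ⋂ (v : V) (_ : t.depth v ≠ k), {f : lp (fun _ : V => ℂ) 2 | f v = 0} := by
      ext f
      simp only [Set.mem_iInter, Set.mem_setOf_eq]
      rfl
    rw [hset]
    exact isClosed_iInter fun v => isClosed_iInter fun hv =>
      isClosed_eq (hev v) continuous_const
  set K : Submodule ℂ (lp (fun _ : V => ℂ) 2) := LinearMap.ker (A : lp (fun _ : V => ℂ) 2 →ₗ[ℂ] lp (fun _ : V => ℂ) 2) with hKdef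
  have hKclosed : IsClosed (K : Set (lp (fun _ : V => ℂ) 2)) :=
    ContinuousLinearMap.isClosed_ker A
  set W : ℕ → Submodule ℂ (lp (fun _ : V => ℂ) 2) := fun k => K ⊓ Esub k with hWdef
  have hWclosed : ∀ k, IsClosed (W k : Set (lp (fun _ : V => ℂ) 2)) := by
    intro k
    rw [hWdef]
    rw [Submodule.coe_inf]
    exact hKclosed.inter (hEclosed k)
  have hbasis : ∀ k : ℕ, ∃ (w : Set (W k)) (b : HilbertBasis w ℂ (W k)),
      ⇑b = ((↑) : w → W k) := by
    intro k
    haveI : CompleteSpace (W k) := (hWclosed k).completeSpace_coe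
    exact exists_hilbertBasis ℂ (W k)
  choose w bas hb using hbasis
  have hmem : ∀ (kk : ℕ) (x : W kk),
      (x : lp (fun _ : V => ℂ) 2) ∈ K ∧ (x : lp (fun _ : V => ℂ) 2) ∈ Esub kk :=
    fun kk x => Submodule.mem_inf.1 x.2
  have hsupp : ∀ (kk : ℕ) (x : W kk) (v : V), t.depth v ≠ kk →
      (x : lp (fun _ : V => ℂ) 2) v = 0 := fun kk x v hv => (hmem kk x).2 v hv
  refine ⟨Σ k : ℕ, w k, fun j => ((j.2 : W j.1) : lp (fun _ : V => ℂ) 2),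
    fun j => j.1, ?_, ?_, ?_, ?_⟩
  · -- orthonormality
    refine ⟨fun j => ?_, fun {i j} hij => ?_⟩
    · have h1 := (bas j.1).orthonormal.1 j.2
      rw [hb j.1] at h1
      exact h1
    · obtain ⟨k1, x⟩ := i
      obtain ⟨k2, y⟩ := j
      by_cases hk : k1 = k2
      · subst hk
        have hxy : x ≠ y := by
          intro h
          exact hij (by rw [h])
        have h1 := (bas k1).orthonormal.2 hxy
        rw [hb k1] at h1
        rw [← Submodule.coe_inner]
        exact h1
      · apply hinner0
        intro v
        by_cases h1 : t.depth v = k1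
        · right; exact hsupp k2 y v (by omega)
        · left; exact hsupp k1 x v h1
  · -- kernel membership
    exact fun j => (hmem j.1 j.2).1
  · -- support
    exact fun j u hu => hsupp j.1 j.2 u hu
  · -- density
    intro f hf
    have hfK : A f = 0 := LinearMap.mem_ker.1 hf
    set bb : (Σ k : ℕ, w k) → lp (fun _ : V => ℂ) 2 :=
      fun j => ((j.2 : W j.1) : lp (fun _ : V => ℂ) 2) with hbb
    set C : Submodule ℂ (lp (fun _ : V => ℂ) 2) :=
      (Submodule.span ℂ (Set.range bb)).topologicalClosure with hC
    have hCclosed : IsClosed (C : Set (lp (fun _ : V => ℂ) 2)) :=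
      Submodule.isClosed_topologicalClosure _
    suffices hfC : f ∈ C by
      rw [← Submodule.topologicalClosure_coe]
      exact hfC
    -- every element of `W k` is in `C`
    have hWC : ∀ (kk : ℕ) (x : W kk), (x : lp (fun _ : V => ℂ) 2) ∈ C := by
      intro kk x
      have hx : x ∈ closure ((Submodule.span ℂ (Set.range ⇑(bas kk)) : Submodule ℂ (W kk)) :
          Set (W kk)) := by
        rw [← Submodule.topologicalClosure_coe, (bas kk).dense_span]
        trivial
      have h1 : (x : lp (fun _ : V => ℂ) 2) ∈ closure (Subtype.val ''
          ((Submodule.span ℂ (Set.range ⇑(bas kk)) : Submodule ℂ (W kk)) : Set (W kk))) :=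
        image_closure_subset_closure_image continuous_subtype_val ⟨x, hx, rfl⟩
      have h2 : Subtype.val ''
          ((Submodule.span ℂ (Set.range ⇑(bas kk)) : Submodule ℂ (W kk)) : Set (W kk)) ⊆
          (Submodule.span ℂ (Set.range bb) : Set (lp (fun _ : V => ℂ) 2)) := by
        rintro _ ⟨y, hy, rfl⟩
        have hle : Submodule.map (W kk).subtype (Submodule.span ℂ (Set.range ⇑(bas kk))) ≤
            Submodule.span ℂ (Set.range bb) := by
          rw [← Submodule.span_image]
          apply Submodule.span_mono
          rintro _ ⟨_, ⟨i, rfl⟩, rfl⟩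
          rw [hb kk]
          exact ⟨⟨kk, i⟩, rfl⟩
        exact hle ⟨y, hy, rfl⟩
      have h3 : (x : lp (fun _ : V => ℂ) 2) ∈ closure
          (Submodule.span ℂ (Set.range bb) : Set (lp (fun _ : V => ℂ) 2)) :=
        closure_mono h2 h1
      rw [← Submodule.topologicalClosure_coe] at h3
      exact h3
    -- generation truncations of `f` lie in `C`
    have htk : ∀ kk : ℕ, stmt7_trunc (fun v => t.depth v = kk) f ∈ C := by
      intro kk
      have h1 : stmt7_trunc (fun v => t.depth v = kk) f ∈ K :=
        LinearMap.mem_ker.2 (htrunc_mem kk f hfK)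
      have h2 : stmt7_trunc (fun v => t.depth v = kk) f ∈ Esub kk := by
        intro v hv
        rw [stmt7_trunc_apply, if_neg hv]
      exact hWC kk ⟨_, Submodule.mem_inf.2 ⟨h1, h2⟩⟩
    -- head truncations of `f` lie in `C`
    have hg : ∀ n : ℕ, stmt7_trunc (fun v => t.depth v < n) f ∈ C := by
      intro n
      induction n with
      | zero =>
        have h0 : stmt7_trunc (fun v => t.depth v < 0) f = 0 := by
          apply lp.ext
          funext v
          rw [lp.coeFn_zero, Pi.zero_apply]
          rw [stmt7_trunc_apply, if_neg (by omega)]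
        rw [h0]
        exact C.zero_mem
      | succ n ih =>
        have hsplit : stmt7_trunc (fun v => t.depth v < n + 1) f =
            stmt7_trunc (fun v => t.depth v < n) f +
              stmt7_trunc (fun v => t.depth v = n) f := by
          apply lp.ext
          funext v
          rw [lp.coeFn_add, Pi.add_apply]
          rw [stmt7_trunc_apply, stmt7_trunc_apply, stmt7_trunc_apply]
          by_cases h1 : t.depth v < n
          · rw [if_pos (by omega), if_pos h1, if_neg (by omega), add_zero]
          · by_cases h2 : t.depth v = n
            · rw [if_pos (by omega), if_neg h1, if_pos h2, zero_add]
            · rw [if_neg (by omega), if_neg h1, if_neg h2, add_zero]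
        rw [hsplit]
        exact C.add_mem ih (htk n)
    -- convergence of the head truncations to `f`
    set F : V → ℝ := fun v => ‖f v‖ ^ 2 with hF
    have hFnonneg : ∀ v, 0 ≤ F v := fun v => by rw [hF]; positivity
    have hFsum : Summable F := by
      have h1 := (lp.memℓp f).summable (p := 2) (by norm_num)
      simpa only [stmt7_rpow_two] using h1
    have hnorm : ∀ n : ℕ, ‖stmt7_trunc (fun v => t.depth v < n) f - f‖ ^ 2 =
        ∑' v, (if t.depth v < n then 0 else F v) := by
      intro n
      have h1 := lp.norm_rpow_eq_tsum (p := 2) (by norm_num)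
        (stmt7_trunc (fun v => t.depth v < n) f - f)
      rw [stmt7_rpow_two] at h1
      rw [h1]
      congr 1
      funext v
      rw [lp.coeFn_sub, Pi.sub_apply, stmt7_trunc_apply, stmt7_rpow_two]
      by_cases h : t.depth v < n
      · rw [if_pos h, if_pos h, sub_self, norm_zero]
        norm_num
      · rw [if_neg h, if_neg h, zero_sub, norm_neg, hF]
    have htend0 : Filter.Tendsto (fun n : ℕ => ∑' v, (if t.depth v < n then 0 else F v))
        Filter.atTop (nhds 0) := by
      rw [Metric.tendsto_atTop]
      intro ε hε
      obtain ⟨s, hs⟩ := ((tendsto_order.1 (tendsto_tsum_compl_atTop_zero F)).2 ε hε).exists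
      refine ⟨s.sup t.depth + 1, fun n hn => ?_⟩
      have hGsum : Summable fun v => (if t.depth v < n then 0 else F v) := by
        refine Summable.of_nonneg_of_le (fun v => ?_) (fun v => ?_) hFsum
        · by_cases h : t.depth v < n
          · rw [if_pos h]
          · rw [if_neg h]; exact hFnonneg v
        · by_cases h : t.depth v < n
          · rw [if_pos h]; exact hFnonneg v
          · rw [if_neg h]
      have hGnonneg : 0 ≤ ∑' v, (if t.depth v < n then 0 else F v) :=
        tsum_nonneg fun v => by
          by_cases h : t.depth v < n
          · rw [if_pos h]
          · rw [if_neg h]; exact hFnonneg v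
      have hsuppG : Function.support (fun v => if t.depth v < n then 0 else F v) ⊆
          {x : V | x ∉ s} := by
        intro v hv hvs
        simp only [Function.mem_support] at hv
        have h1 : t.depth v ≤ s.sup t.depth := Finset.le_sup hvs
        have h2 : t.depth v < n := by omega
        rw [if_pos h2] at hv
        exact hv rfl
      have key : (∑' v, (if t.depth v < n then 0 else F v)) ≤
          ∑' (v : {x // x ∉ s}), F ↑v := by
        rw [← tsum_subtype_eq_of_support_subset hsuppG]
        refine Summable.tsum_le_tsum (fun v => ?_) (hGsum.subtype _) (hFsum.subtype _)
        by_cases h : t.depth (v : V) < n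
        · rw [if_pos h]; exact hFnonneg _
        · rw [if_neg h]
      rw [Real.dist_eq, sub_zero, abs_of_nonneg hGnonneg]
      exact lt_of_le_of_lt key hs
    have hnt : Filter.Tendsto
        (fun n : ℕ => ‖stmt7_trunc (fun v => t.depth v < n) f - f‖)
        Filter.atTop (nhds 0) := by
      have h2 : Filter.Tendsto
          (fun n : ℕ => ‖stmt7_trunc (fun v => t.depth v < n) f - f‖ ^ 2)
          Filter.atTop (nhds 0) := by
        simp only [hnorm]
        exact htend0
      have h3 := (Real.continuous_sqrt.tendsto 0).comp h2
      simp only [Function.comp_def, Real.sqrt_sq (norm_nonneg _), Real.sqrt_zero] at h3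
      exact h3
    have hten : Filter.Tendsto (fun n : ℕ => stmt7_trunc (fun v => t.depth v < n) f)
        Filter.atTop (nhds f) := by
      rw [tendsto_iff_norm_sub_tendsto_zero]
      exact hnt
    have hmemC : f ∈ closure (C : Set (lp (fun _ : V => ℂ) 2)) :=
      mem_closure_of_tendsto hten (Filter.Eventually.of_forall fun n => hg n)
    rwa [hCclosed.closure_eq] at hmemC
end

section
/- Let S_λ be a bounded left-invertible weighted shift with positive weights on a countably infinite rooted leafless directed tree with vertex set V; set E = ker S_λ*, P_E the orthogonal projection onto E, L = (S_λ*S_λ)⁻¹S_λ*, and let P_k be the orthogonal projection onto ℓ²(V_k). Let w ∈ ℂ with |w| = 1 and for f ∈ ℓ²(V) define f_w(u) = w^{|u|} f(u). Then: (i) ‖f_w‖ = ‖f‖ for every f ∈ ℓ²(V); (ii) the operator D_w given by D_w g = Σ_{k≥0} w^k P_k g maps E into E; (iii) for every f ∈ ℓ²(V) and every n ∈ ℕ, P_E L^n (f_w) = w^n · D_w(P_E L^n f). -/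
open ComplexConjugate
open scoped ENNReal

noncomputable section

variable {V : Type}

private theorem diag_memℓp (d : V → ℕ) (c : ℂ) (hc : ‖c‖ = 1)
    (f : lp (fun _ : V => ℂ) 2) : Memℓp (fun u => c ^ d u * f u) 2 := by
  have h := lp.memℓp f
  have hp : (0:ℝ) < (2 : ℝ≥0∞).toReal := by norm_num
  rw [memℓp_gen_iff hp] at h ⊢
  simpa [norm_mul, norm_pow, hc] using h

/-- The diagonal operator `f ↦ (c ^ d u * f u)_u` as a linear isometry on `ℓ²`. -/
private def diagLI (d : V → ℕ) (c : ℂ) (hc : ‖c‖ = 1) :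
    lp (fun _ : V => ℂ) 2 →ₗᵢ[ℂ] lp (fun _ : V => ℂ) 2 where
  toFun f := ⟨fun u => c ^ d u * f u, diag_memℓp d c hc f⟩
  map_add' f g := by
    apply lp.ext
    funext u
    simp [lp.coeFn_add, mul_add]
    rfl
  map_smul' r f := by
    apply lp.ext
    funext u
    simp [lp.coeFn_smul]
    ring
  norm_map' f := by
    have hp : (0:ℝ) < (2 : ℝ≥0∞).toReal := by norm_num
    rw [lp.norm_eq_tsum_rpow hp, lp.norm_eq_tsum_rpow hp]
    congr 1
    apply tsum_congr
    intro u
    congr 1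
    show ‖c ^ d u * f u‖ = ‖f u‖
    rw [norm_mul, norm_pow, hc, one_pow, one_mul]

private def diagCLM (d : V → ℕ) (c : ℂ) (hc : ‖c‖ = 1) :
    lp (fun _ : V => ℂ) 2 →L[ℂ] lp (fun _ : V => ℂ) 2 :=
  (diagLI d c hc).toContinuousLinearMap

@[simp] private theorem diagCLM_apply (d : V → ℕ) (c : ℂ) (hc : ‖c‖ = 1)
    (f : lp (fun _ : V => ℂ) 2) (u : V) :
    diagCLM d c hc f u = c ^ d u * f u := rfl

private theorem norm_conj_one {c : ℂ} (hc : ‖c‖ = 1) : ‖conj c‖ = 1 := by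
  rw [RCLike.norm_conj]; exact hc

/-- The adjoint of the diagonal operator. -/
private theorem diagCLM_adjoint (d : V → ℕ) (c : ℂ) (hc : ‖c‖ = 1) :
    ContinuousLinearMap.adjoint (diagCLM d c hc)
      = diagCLM d (conj c) (norm_conj_one hc) := by
  symm
  rw [ContinuousLinearMap.eq_adjoint_iff]
  intro x y
  rw [lp.inner_eq_tsum, lp.inner_eq_tsum]
  apply tsum_congr
  intro u
  rw [RCLike.inner_apply, RCLike.inner_apply, diagCLM_apply, diagCLM_apply]
  rw [map_mul, map_pow, Complex.conj_conj]
  ring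

private theorem adjoint_smul' (c : ℂ)
    (A : lp (fun _ : V => ℂ) 2 →L[ℂ] lp (fun _ : V => ℂ) 2) :
    ContinuousLinearMap.adjoint (c • A) = conj c • ContinuousLinearMap.adjoint A := by
  symm
  rw [ContinuousLinearMap.eq_adjoint_iff]
  intro x y
  simp only [ContinuousLinearMap.smul_apply, inner_smul_left, inner_smul_right,
    ContinuousLinearMap.adjoint_inner_left, Complex.conj_conj]

private theorem adjoint_mul' (A B : lp (fun _ : V => ℂ) 2 →L[ℂ] lp (fun _ : V => ℂ) 2) :
    ContinuousLinearMap.adjoint (A * B)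
      = ContinuousLinearMap.adjoint B * ContinuousLinearMap.adjoint A :=
  ContinuousLinearMap.adjoint_comp A B

end

set_option maxHeartbeats 1000000 in
/-- Rotation by a unimodular `w`: (i) `‖f_w‖ = ‖f‖`; (ii) the diagonal
operator `D_w` (given pointwise by `(D_w g)(u) = w^{|u|} g(u)`) maps `E = ker S_λ*` into
itself; (iii) `P_E L^n (f_w) = w^n · D_w (P_E L^n f)` for all `f` and `n`. -/
theorem stmt_8 {V : Type} [Countable V] [Infinite V] [DecidableEq V]
    (t : RootedDirectedTree V) (hleafless : t.Leafless)
    (lam : V → ℝ) (hlam : ∀ v, v ≠ t.root → 0 < lam v)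
    (Sl : lp (fun _ : V => ℂ) 2 →L[ℂ] lp (fun _ : V => ℂ) 2)
    (hSl : ∀ (f : lp (fun _ : V => ℂ) 2) (v : V),
      Sl f v = if v = t.root then 0 else (lam v : ℂ) * f (t.par v))
    (hbelow : ∃ α : ℝ, 0 < α ∧ ∀ f : lp (fun _ : V => ℂ) 2, α * ‖f‖ ^ 2 ≤ ‖Sl f‖ ^ 2)
    (Sinv : lp (fun _ : V => ℂ) 2 →L[ℂ] lp (fun _ : V => ℂ) 2)
    (hS1 : Sinv * (ContinuousLinearMap.adjoint Sl * Sl) = 1)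
    (hS2 : (ContinuousLinearMap.adjoint Sl * Sl) * Sinv = 1)
    (L : lp (fun _ : V => ℂ) 2 →L[ℂ] lp (fun _ : V => ℂ) 2)
    (hL : L = Sinv * ContinuousLinearMap.adjoint Sl)
    (w : ℂ) (hw : ‖w‖ = 1) :
    -- (i) the rotation `f_w` exists in `ℓ²(V)` and has the same norm as `f`
    (∀ f : lp (fun _ : V => ℂ) 2, ∃ fw : lp (fun _ : V => ℂ) 2,
      (∀ u : V, fw u = w ^ (t.depth u) * f u) ∧ ‖fw‖ = ‖f‖) ∧
    -- (ii) `D_w` maps `ker S_λ*` into itself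
    (∀ g ∈ LinearMap.ker (ContinuousLinearMap.adjoint Sl : lp (fun _ : V => ℂ) 2 →ₗ[ℂ] lp (fun _ : V => ℂ) 2),
      ∀ gw : lp (fun _ : V => ℂ) 2, (∀ u : V, gw u = w ^ (t.depth u) * g u) →
        gw ∈ LinearMap.ker (ContinuousLinearMap.adjoint Sl : lp (fun _ : V => ℂ) 2 →ₗ[ℂ] lp (fun _ : V => ℂ) 2)) ∧
    -- (iii) `P_E L^n (f_w) = w^n · D_w (P_E L^n f)` pointwise
    (∀ f fw : lp (fun _ : V => ℂ) 2, (∀ u : V, fw u = w ^ (t.depth u) * f u) →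
      ∀ (n : ℕ) (u : V),
        (↑(Submodule.orthogonalProjectionOnto (LinearMap.ker (ContinuousLinearMap.adjoint Sl : lp (fun _ : V => ℂ) 2 →ₗ[ℂ] lp (fun _ : V => ℂ) 2))
            ((L ^ n) fw)) : lp (fun _ : V => ℂ) 2) u =
          w ^ n * (w ^ (t.depth u) *
            (↑(Submodule.orthogonalProjectionOnto (LinearMap.ker (ContinuousLinearMap.adjoint Sl : lp (fun _ : V => ℂ) 2 →ₗ[ℂ] lp (fun _ : V => ℂ) 2))
              ((L ^ n) f)) : lp (fun _ : V => ℂ) 2) u)) := by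
  classical
  set SlA := ContinuousLinearMap.adjoint Sl with hSlA
  set D := diagCLM t.depth w hw with hDdef
  set Db := diagCLM t.depth (conj w) (norm_conj_one hw) with hDbdef
  have hwcw : w * conj w = 1 := by
    rw [mul_comm, RCLike.conj_mul, hw]; norm_num
  have hcwc : conj w * w = 1 := by rw [RCLike.conj_mul, hw]; norm_num
  -- commutation of `Sl` with a generic diagonal operator
  have hcomm : ∀ (c : ℂ) (hc : ‖c‖ = 1),
      Sl * diagCLM t.depth c hc = conj c • (diagCLM t.depth c hc * Sl) := by
    intro c hc
    have hcc : conj c * c = 1 := by rw [RCLike.conj_mul, hc]; norm_num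
    refine ContinuousLinearMap.ext fun f => ?_
    apply lp.ext
    funext v
    show Sl (diagCLM t.depth c hc f) v
        = (conj c • ((diagCLM t.depth c hc * Sl) f)) v
    rw [lp.coeFn_smul, Pi.smul_apply, smul_eq_mul, ContinuousLinearMap.mul_apply,
      diagCLM_apply, hSl, hSl]
    by_cases hv : v = t.root
    · simp [hv]
    · rw [if_neg hv, if_neg hv, diagCLM_apply]
      obtain ⟨m, hm⟩ := Nat.exists_eq_succ_of_ne_zero
        (fun h0 => hv ((t.depth_eq_zero_iff v).1 h0))
      rw [t.depth_par v hv, hm]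
      simp only [Nat.succ_sub_one]
      rw [pow_succ]
      linear_combination (-((lam v : ℂ) * c ^ m * f (t.par v))) * hcc
  have h1 : Sl * D = conj w • (D * Sl) := hcomm w hw
  have h2 : Sl * Db = w • (Db * Sl) := by
    have h := hcomm (conj w) (norm_conj_one hw)
    rwa [Complex.conj_conj] at h
  have hDadj : ContinuousLinearMap.adjoint D = Db := diagCLM_adjoint t.depth w hw
  have hDbadj : ContinuousLinearMap.adjoint Db = D := by
    rw [← hDadj, ContinuousLinearMap.adjoint_adjoint]
  -- adjoint commutation relations
  have h3 : SlA * D = w • (D * SlA) := by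
    have h : ContinuousLinearMap.adjoint (Sl * Db)
        = ContinuousLinearMap.adjoint (w • (Db * Sl)) := by rw [h2]
    rw [adjoint_mul', adjoint_smul', adjoint_mul', hDbadj, ← hSlA] at h
    -- h : D * SlA = conj w • (SlA * D)
    rw [h, smul_smul, hwcw, one_smul]
  have h3b : SlA * Db = conj w • (Db * SlA) := by
    have h : ContinuousLinearMap.adjoint (Sl * D)
        = ContinuousLinearMap.adjoint (conj w • (D * Sl)) := by rw [h1]
    rw [adjoint_mul', adjoint_smul', adjoint_mul', hDadj, ← hSlA,
      Complex.conj_conj] at h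
    -- h : Db * SlA = w • (SlA * Db)
    rw [h, smul_smul, hcwc, one_smul]
  -- D commutes with SlA * Sl
  have h4 : (SlA * Sl) * D = D * (SlA * Sl) := by
    calc (SlA * Sl) * D = SlA * (Sl * D) := by rw [mul_assoc]
      _ = SlA * (conj w • (D * Sl)) := by rw [h1]
      _ = conj w • (SlA * (D * Sl)) := (mul_smul_comm _ _ _)
      _ = conj w • ((SlA * D) * Sl) := by rw [mul_assoc]
      _ = conj w • ((w • (D * SlA)) * Sl) := by rw [h3]
      _ = (conj w * w) • (D * (SlA * Sl)) := by
          rw [smul_mul_assoc, smul_smul, mul_assoc]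
      _ = D * (SlA * Sl) := by rw [hcwc, one_smul]
  -- D commutes with Sinv
  have h5 : Sinv * D = D * Sinv := by
    have e1 : Sinv * ((SlA * Sl) * D) * Sinv = D * Sinv := by
      rw [← mul_assoc Sinv (SlA * Sl) D, hS1, one_mul]
    have e2 : Sinv * (D * (SlA * Sl)) * Sinv = Sinv * D := by
      rw [mul_assoc Sinv (D * (SlA * Sl)) Sinv, mul_assoc D (SlA * Sl) Sinv,
        hS2, mul_one]
    rw [← e2, ← h4]
    exact e1
  -- L "commutes" with D up to a factor of w
  have h6 : L * D = w • (D * L) := by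
    calc L * D = Sinv * (SlA * D) := by rw [hL, mul_assoc]
      _ = Sinv * (w • (D * SlA)) := by rw [h3]
      _ = w • (Sinv * (D * SlA)) := (mul_smul_comm _ _ _)
      _ = w • ((Sinv * D) * SlA) := by rw [mul_assoc]
      _ = w • ((D * Sinv) * SlA) := by rw [h5]
      _ = w • (D * L) := by rw [mul_assoc, hL]
  have h7 : ∀ n : ℕ, L ^ n * D = (w ^ n) • (D * L ^ n) := by
    intro n
    induction n with
    | zero => simp
    | succ n ih =>
      calc L ^ (n + 1) * D = L * (L ^ n * D) := by rw [pow_succ']; rw [mul_assoc]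
        _ = L * ((w ^ n) • (D * L ^ n)) := by rw [ih]
        _ = (w ^ n) • (L * (D * L ^ n)) := (mul_smul_comm _ _ _)
        _ = (w ^ n) • ((L * D) * L ^ n) := by rw [mul_assoc]
        _ = (w ^ n) • ((w • (D * L)) * L ^ n) := by rw [h6]
        _ = (w ^ n * w) • (D * (L * L ^ n)) := by
            rw [smul_mul_assoc, smul_smul, mul_assoc]
        _ = (w ^ (n + 1)) • (D * L ^ (n + 1)) := by rw [← pow_succ, ← pow_succ']
  -- kernel preservation
  have hkerD : ∀ x ∈ LinearMap.ker (SlA : lp (fun _ : V => ℂ) 2 →ₗ[ℂ] lp (fun _ : V => ℂ) 2), D x ∈ LinearMap.ker (SlA : lp (fun _ : V => ℂ) 2 →ₗ[ℂ] lp (fun _ : V => ℂ) 2) := by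
    intro x hx
    rw [LinearMap.mem_ker, ContinuousLinearMap.coe_coe] at hx ⊢
    have h := congrArg (fun T => T x) h3
    simp only [ContinuousLinearMap.mul_apply, ContinuousLinearMap.smul_apply] at h
    rw [h, hx, map_zero, smul_zero]
  have hkerDb : ∀ x ∈ LinearMap.ker (SlA : lp (fun _ : V => ℂ) 2 →ₗ[ℂ] lp (fun _ : V => ℂ) 2), Db x ∈ LinearMap.ker (SlA : lp (fun _ : V => ℂ) 2 →ₗ[ℂ] lp (fun _ : V => ℂ) 2) := by
    intro x hx
    rw [LinearMap.mem_ker, ContinuousLinearMap.coe_coe] at hx ⊢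
    have h := congrArg (fun T => T x) h3b
    simp only [ContinuousLinearMap.mul_apply, ContinuousLinearMap.smul_apply] at h
    rw [h, hx, map_zero, smul_zero]
  -- the projection onto the kernel commutes with D
  have h8 : ∀ h : lp (fun _ : V => ℂ) 2,
      (↑(Submodule.orthogonalProjectionOnto (LinearMap.ker (SlA : lp (fun _ : V => ℂ) 2 →ₗ[ℂ] lp (fun _ : V => ℂ) 2)) (D h)) : lp (fun _ : V => ℂ) 2)
        = D ↑(Submodule.orthogonalProjectionOnto (LinearMap.ker (SlA : lp (fun _ : V => ℂ) 2 →ₗ[ℂ] lp (fun _ : V => ℂ) 2)) h) := by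
    intro h
    apply Submodule.eq_starProjection_of_mem_of_inner_eq_zero
    · exact hkerD _ (Submodule.orthogonalProjectionOnto (LinearMap.ker (SlA : lp (fun _ : V => ℂ) 2 →ₗ[ℂ] lp (fun _ : V => ℂ) 2)) h).2
    · intro e he
      rw [← map_sub D]
      rw [← ContinuousLinearMap.adjoint_inner_right D, hDadj]
      have hDbe : Db e ∈ LinearMap.ker (SlA : lp (fun _ : V => ℂ) 2 →ₗ[ℂ] lp (fun _ : V => ℂ) 2) := hkerDb e he
      have horth := Submodule.sub_starProjection_mem_orthogonal
        (K := LinearMap.ker (SlA : lp (fun _ : V => ℂ) 2 →ₗ[ℂ] lp (fun _ : V => ℂ) 2)) h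
      exact (Submodule.mem_orthogonal' _ _).1 horth (Db e) hDbe
  refine ⟨?_, ?_, ?_⟩
  · -- (i)
    intro f
    exact ⟨D f, fun u => rfl, (diagLI t.depth w hw).norm_map f⟩
  · -- (ii)
    intro g hg gw hgw
    have hgD : gw = D g := by
      apply lp.ext
      funext u
      rw [hgw u]
      rfl
    rw [hgD]
    exact hkerD g hg
  · -- (iii)
    intro f fw hfw n u
    have hfwD : fw = D f := by
      apply lp.ext
      funext u'
      rw [hfw u']
      rfl
    have key : (L ^ n) (D f) = (w ^ n) • (D ((L ^ n) f)) := by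
      have h := congrArg (fun T => T f) (h7 n)
      simpa only [ContinuousLinearMap.mul_apply, ContinuousLinearMap.smul_apply]
        using h
    rw [hfwD, key, map_smul]
    rw [Submodule.coe_smul, h8, lp.coeFn_smul, Pi.smul_apply, smul_eq_mul,
      diagCLM_apply]
end

section
/- Let S_λ be a bounded balanced weighted shift with positive weights on a countably infinite rooted directed tree with vertex set V. Let f ∈ ℓ²(V_k) and g ∈ ℓ²(V_l) for some k, l ∈ ℕ, let n ∈ ℕ, and let u' ∈ V with |u'| = k + n. Then ⟨S_λ^n f, S_λ^n g⟩ = (Π_{j=1}^{n} ‖S_λ e_{par^j(u')}‖²) · ⟨f, g⟩. In particular, if f ⟂ g then S_λ^n f ⟂ S_λ^n g for all n ∈ ℕ. -/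
lemma norm_Sl_single_sq {V : Type} [Countable V] [DecidableEq V]
    (t : RootedDirectedTree V) (lam : V → ℝ)
    (Sl : lp (fun _ : V => ℂ) 2 →L[ℂ] lp (fun _ : V => ℂ) 2)
    (hSl : ∀ (f : lp (fun _ : V => ℂ) 2) (v : V),
      Sl f v = if v = t.root then 0 else (lam v : ℂ) * f (t.par v))
    (u : V) :
    ((‖Sl (lp.single 2 u (1 : ℂ))‖ ^ 2 : ℝ) : ℂ)
      = ∑' v : (t.par ⁻¹' {u} : Set V),
          (if (v : V) = t.root then 0 else ((lam v : ℂ)) ^ 2) := by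
  classical
  have h1 : ((‖Sl (lp.single 2 u (1 : ℂ))‖ ^ 2 : ℝ) : ℂ)
      = inner (𝕜 := ℂ) (Sl (lp.single 2 u (1 : ℂ))) (Sl (lp.single 2 u (1 : ℂ))) := by
    rw [inner_self_eq_norm_sq_to_K]
    norm_cast
  rw [h1, lp.inner_eq_tsum,
    tsum_subtype (t.par ⁻¹' {u}) (fun v => if v = t.root then 0 else ((lam v : ℂ)) ^ 2)]
  refine tsum_congr fun v => ?_
  rw [Set.indicator_apply]
  by_cases hr : v = t.root
  · simp [RCLike.inner_apply, hSl, hr]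
  · by_cases hp : t.par v = u
    · have : (Sl (lp.single 2 u (1 : ℂ))) v = (lam v : ℂ) := by
        rw [hSl, if_neg hr, hp, lp.single_apply_self, mul_one]
      simp only [RCLike.inner_apply, this, Set.mem_preimage, Set.mem_singleton_iff, hp, if_pos,
        if_neg hr, Complex.conj_ofReal]
      ring
    · have : (Sl (lp.single 2 u (1 : ℂ))) v = 0 := by
        rw [hSl, if_neg hr, lp.single_apply_ne 2 u _ hp, mul_zero]
      simp [RCLike.inner_apply, this, Set.indicator_apply, Set.mem_preimage, hp]

lemma step_lemma {V : Type} [Countable V] [DecidableEq V]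
    (t : RootedDirectedTree V) (lam : V → ℝ)
    (Sl : lp (fun _ : V => ℂ) 2 →L[ℂ] lp (fun _ : V => ℂ) 2)
    (hSl : ∀ (f : lp (fun _ : V => ℂ) 2) (v : V),
      Sl f v = if v = t.root then 0 else (lam v : ℂ) * f (t.par v))
    (hbal : ∀ u v : V, t.depth u = t.depth v →
      ‖Sl (lp.single 2 u (1 : ℂ))‖ = ‖Sl (lp.single 2 v (1 : ℂ))‖)
    (a : ℕ) (w : V) (hw : t.depth w = a)
    (F G : lp (fun _ : V => ℂ) 2) (hF : ∀ u : V, t.depth u ≠ a → F u = 0) :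
    inner (𝕜 := ℂ) (Sl F) (Sl G)
      = ((‖Sl (lp.single 2 w (1 : ℂ))‖ ^ 2 : ℝ) : ℂ) * inner (𝕜 := ℂ) F G := by
  classical
  have hsum : HasSum (fun v : V => (starRingEnd ℂ) ((Sl F) v) * ((Sl G) v))
      (inner (𝕜 := ℂ) (Sl F) (Sl G)) := by
    have h := lp.hasSum_inner (𝕜 := ℂ) (Sl F) (Sl G)
    rw [show (fun v : V => (starRingEnd ℂ) ((Sl F) v) * ((Sl G) v))
        = fun i => inner ℂ ((Sl F) i) ((Sl G) i) from
        funext fun v => by rw [RCLike.inner_apply, mul_comm]]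
    exact h
  have h2 := hsum.tsum_fiberwise t.par
  have key : ∀ u : V,
      (∑' v : (t.par ⁻¹' {u} : Set V), (starRingEnd ℂ) ((Sl F) v) * ((Sl G) v))
        = ((‖Sl (lp.single 2 w (1 : ℂ))‖ ^ 2 : ℝ) : ℂ) * ((starRingEnd ℂ) (F u) * G u) := by
    intro u
    have hterm : ∀ v : (t.par ⁻¹' {u} : Set V),
        (starRingEnd ℂ) ((Sl F) v) * ((Sl G) v)
          = ((starRingEnd ℂ) (F u) * G u) *
              (if (v : V) = t.root then 0 else ((lam v : ℂ)) ^ 2) := by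
      rintro ⟨v, hv⟩
      have hv' : t.par v = u := hv
      by_cases hr : v = t.root
      · simp [hSl, hr]
      · simp only [hSl, if_neg hr, hv', map_mul, Complex.conj_ofReal]
        ring
    rw [tsum_congr hterm, tsum_mul_left, ← norm_Sl_single_sq t lam Sl hSl u]
    by_cases hFu : F u = 0
    · simp [hFu]
    · have hdu : t.depth u = a := by
        by_contra hne
        exact hFu (hF u hne)
      rw [hbal u w (by rw [hdu, hw])]
      ring
  calc inner (𝕜 := ℂ) (Sl F) (Sl G)
      = ∑' u : V, (∑' v : (t.par ⁻¹' {u} : Set V),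
          (starRingEnd ℂ) ((Sl F) v) * ((Sl G) v)) := h2.tsum_eq.symm
    _ = ∑' u : V, ((‖Sl (lp.single 2 w (1 : ℂ))‖ ^ 2 : ℝ) : ℂ) *
          ((starRingEnd ℂ) (F u) * G u) := tsum_congr key
    _ = ((‖Sl (lp.single 2 w (1 : ℂ))‖ ^ 2 : ℝ) : ℂ) *
          ∑' u : V, (starRingEnd ℂ) (F u) * G u := tsum_mul_left
    _ = _ := by rw [lp.inner_eq_tsum]; simp [RCLike.inner_apply, mul_comm]

lemma supp_pow {V : Type} [Countable V] [DecidableEq V]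
    (t : RootedDirectedTree V) (lam : V → ℝ)
    (Sl : lp (fun _ : V => ℂ) 2 →L[ℂ] lp (fun _ : V => ℂ) 2)
    (hSl : ∀ (f : lp (fun _ : V => ℂ) 2) (v : V),
      Sl f v = if v = t.root then 0 else (lam v : ℂ) * f (t.par v))
    (a : ℕ) (F : lp (fun _ : V => ℂ) 2) (hF : ∀ u : V, t.depth u ≠ a → F u = 0) :
    ∀ n : ℕ, ∀ u : V, t.depth u ≠ a + n → ((Sl ^ n) F) u = 0 := by
  intro n
  induction n generalizing a F with
  | zero => simpa using hF
  | succ n ih =>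
    intro u hu
    have hstep : ∀ u : V, t.depth u ≠ a + 1 → (Sl F) u = 0 := by
      intro u hu
      rw [hSl]
      by_cases hr : u = t.root
      · simp [hr]
      · rw [if_neg hr]
        have : F (t.par u) = 0 := by
          apply hF
          intro hdep
          have h1 : t.depth (t.par u) = t.depth u - 1 := t.depth_par u hr
          have h0 : t.depth u ≠ 0 := fun h => hr ((t.depth_eq_zero_iff u).mp h)
          omega
        rw [this, mul_zero]
    have : (Sl ^ (n + 1)) F = (Sl ^ n) (Sl F) := by
      rw [pow_succ, ContinuousLinearMap.mul_apply]
    rw [this]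
    exact ih (a + 1) (Sl F) hstep u (by omega)

lemma prod_Icc_shift (a : ℕ → ℝ) (n : ℕ) :
    ∏ j ∈ Finset.Icc 1 (n + 1), a j = a 1 * ∏ j ∈ Finset.Icc 1 n, a (j + 1) := by
  induction n with
  | zero => simp
  | succ n ih =>
    rw [Finset.prod_Icc_succ_top (by omega) a, ih,
      Finset.prod_Icc_succ_top (by omega) (fun j => a (j + 1)), ← mul_assoc]

/-- Let `S_λ` be a bounded balanced weighted shift on a countably infinite
rooted directed tree.  If `f ∈ ℓ²(V_k)`, `g ∈ ℓ²(V_l)`, `n ∈ ℕ` and `|u'| = k + n`, then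
`⟨S_λ^n f, S_λ^n g⟩ = (Π_{j=1}^{n} ‖S_λ e_{par^j(u')}‖²) · ⟨f, g⟩`; in particular `f ⟂ g`
implies `S_λ^m f ⟂ S_λ^m g` for all `m`. -/
theorem stmt_13 {V : Type} [Countable V] [Infinite V] [DecidableEq V]
    (t : RootedDirectedTree V)
    (lam : V → ℝ) (hlam : ∀ v, v ≠ t.root → 0 < lam v)
    (Sl : lp (fun _ : V => ℂ) 2 →L[ℂ] lp (fun _ : V => ℂ) 2)
    (hSl : ∀ (f : lp (fun _ : V => ℂ) 2) (v : V),
      Sl f v = if v = t.root then 0 else (lam v : ℂ) * f (t.par v))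
    (hbal : ∀ u v : V, t.depth u = t.depth v →
      ‖Sl (lp.single 2 u (1 : ℂ))‖ = ‖Sl (lp.single 2 v (1 : ℂ))‖)
    (k l : ℕ) (f g : lp (fun _ : V => ℂ) 2)
    (hf : ∀ u : V, t.depth u ≠ k → f u = 0)
    (hg : ∀ u : V, t.depth u ≠ l → g u = 0) :
    (∀ (n : ℕ) (u' : V), t.depth u' = k + n →
      inner (𝕜 := ℂ) ((Sl ^ n) f) ((Sl ^ n) g) =
        ((∏ j ∈ Finset.Icc 1 n, ‖Sl (lp.single 2 (t.par^[j] u') (1 : ℂ))‖ ^ 2 : ℝ) : ℂ) *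
          inner (𝕜 := ℂ) f g) ∧
    (inner (𝕜 := ℂ) f g = 0 → ∀ m : ℕ,
      inner (𝕜 := ℂ) ((Sl ^ m) f) ((Sl ^ m) g) = 0) := by
  classical
  constructor
  · intro n
    induction n with
    | zero => intro u' _; simp
    | succ n ih =>
      intro u' hu'
      have hr : u' ≠ t.root := by
        intro h
        have := (t.depth_eq_zero_iff u').mpr h
        omega
      have hw : t.depth (t.par u') = k + n := by
        rw [t.depth_par u' hr]
        omega
      have hpowf : (Sl ^ (n + 1)) f = Sl ((Sl ^ n) f) := by
        rw [pow_succ', ContinuousLinearMap.mul_apply]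
      have hpowg : (Sl ^ (n + 1)) g = Sl ((Sl ^ n) g) := by
        rw [pow_succ', ContinuousLinearMap.mul_apply]
      rw [hpowf, hpowg,
        step_lemma t lam Sl hSl hbal (k + n) (t.par u') hw ((Sl ^ n) f) ((Sl ^ n) g)
          (supp_pow t lam Sl hSl k f hf n),
        ih (t.par u') hw, ← mul_assoc]
      congr 1
      rw [← Complex.ofReal_mul]
      congr 1
      rw [prod_Icc_shift (fun j => ‖Sl (lp.single 2 (t.par^[j] u') (1 : ℂ))‖ ^ 2) n]
      simp only [Function.iterate_one, Function.iterate_succ_apply,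
        Function.iterate_zero_apply]
  · intro h0 m
    induction m with
    | zero => simpa using h0
    | succ m ihm =>
      have hpowf : (Sl ^ (m + 1)) f = Sl ((Sl ^ m) f) := by
        rw [pow_succ', ContinuousLinearMap.mul_apply]
      have hpowg : (Sl ^ (m + 1)) g = Sl ((Sl ^ m) g) := by
        rw [pow_succ', ContinuousLinearMap.mul_apply]
      by_cases hex : ∃ w : V, t.depth w = k + m
      · obtain ⟨w, hw⟩ := hex
        rw [hpowf, hpowg,
          step_lemma t lam Sl hSl hbal (k + m) w hw ((Sl ^ m) f) ((Sl ^ m) g)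
            (supp_pow t lam Sl hSl k f hf m),
          ihm, mul_zero]
      · push_neg at hex
        have hz : (Sl ^ m) f = 0 := by
          apply lp.ext
          funext u
          rw [lp.coeFn_zero, Pi.zero_apply]
          exact supp_pow t lam Sl hSl k f hf m u (hex u)
        rw [hpowf, hz, map_zero, inner_zero_left]
end

section
/- Let S_λ be a bounded balanced weighted shift with positive weights on a countably infinite rooted directed tree with vertex set V, and assume S_λ is bounded below by a constant c > 0 (‖S_λ f‖ ≥ c‖f‖ for all f). Let {e'_j}_{j∈J} be an orthonormal basis of ker S_λ* such that e'_j ∈ ℓ²(V_{k_j}) for some k_j ∈ ℕ, for every j ∈ J. Then for all i, j ∈ J there exist constants c_{ij} > 0 and C_{ij} > 0 such that c_{ij} ≤ ‖S_λ^n e'_i‖ / ‖S_λ^n e'_j‖ ≤ C_{ij} for every n ∈ ℕ. -/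
set_option maxHeartbeats 1000000

private lemma stmt14_fiber_tsum {V : Type} (par : V → V) (g : V → ℝ) (hg : Summable g) :
    ∑' v, g v = ∑' u, ∑' v : {v : V // par v = u}, g ↑v := by
  rw [← (Equiv.sigmaFiberEquiv par).tsum_eq g]
  exact Summable.tsum_sigma ((Equiv.sigmaFiberEquiv par).summable_iff.mpr hg)

/-- Let `S_λ` be a bounded balanced weighted shift, bounded below by
`c > 0`, and let `{e'_j}` be an orthonormal basis of `ker S_λ*` with `e'_j ∈ ℓ²(V_{k_j})`.
Then for all `i, j` there are constants `0 < c_{ij}` and `0 < C_{ij}` such that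
`c_{ij} ≤ ‖S_λ^n e'_i‖ / ‖S_λ^n e'_j‖ ≤ C_{ij}` for every `n`. -/
theorem stmt_14 {V : Type} [Countable V] [Infinite V] [DecidableEq V]
    (t : RootedDirectedTree V)
    (lam : V → ℝ) (hlam : ∀ v, v ≠ t.root → 0 < lam v)
    (Sl : lp (fun _ : V => ℂ) 2 →L[ℂ] lp (fun _ : V => ℂ) 2)
    (hSl : ∀ (f : lp (fun _ : V => ℂ) 2) (v : V),
      Sl f v = if v = t.root then 0 else (lam v : ℂ) * f (t.par v))
    (hbal : ∀ u v : V, t.depth u = t.depth v →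
      ‖Sl (lp.single 2 u (1 : ℂ))‖ = ‖Sl (lp.single 2 v (1 : ℂ))‖)
    (c : ℝ) (hc : 0 < c)
    (hbelow : ∀ f : lp (fun _ : V => ℂ) 2, c * ‖f‖ ≤ ‖Sl f‖)
    (J : Type) (b : J → lp (fun _ : V => ℂ) 2) (k : J → ℕ)
    (hb_on : Orthonormal ℂ b)
    (hb_ker : ∀ j, b j ∈ LinearMap.ker (ContinuousLinearMap.adjoint Sl : lp (fun _ : V => ℂ) 2 →ₗ[ℂ] lp (fun _ : V => ℂ) 2))
    (hb_sep : ∀ (j : J) (u : V), t.depth u ≠ k j → b j u = 0)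
    (hb_total : (LinearMap.ker (ContinuousLinearMap.adjoint Sl : lp (fun _ : V => ℂ) 2 →ₗ[ℂ] lp (fun _ : V => ℂ) 2) :
        Set (lp (fun _ : V => ℂ) 2)) ⊆
      closure (Submodule.span ℂ (Set.range b) : Set (lp (fun _ : V => ℂ) 2))) :
    ∀ i j : J, ∃ cij Cij : ℝ, 0 < cij ∧ 0 < Cij ∧
      ∀ n : ℕ, cij ≤ ‖(Sl ^ n) (b i)‖ / ‖(Sl ^ n) (b j)‖ ∧
        ‖(Sl ^ n) (b i)‖ / ‖(Sl ^ n) (b j)‖ ≤ Cij := by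
  classical
  -- norm-squared formula on ℓ²
  have hnormsq : ∀ f : lp (fun _ : V => ℂ) 2, ‖f‖ ^ 2 = ∑' v, ‖f v‖ ^ 2 := by
    intro f
    have h := lp.norm_rpow_eq_tsum (p := 2) (E := fun _ : V => ℂ) (by norm_num) f
    rw [show ((2 : ENNReal)).toReal = ((2 : ℕ) : ℝ) by norm_num] at h
    simp_rw [Real.rpow_natCast] at h
    exact h
  have hsummable : ∀ f : lp (fun _ : V => ℂ) 2, Summable (fun v => ‖f v‖ ^ 2) := by
    intro f
    have h := (lp.memℓp f).summable (p := 2) (by norm_num)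
    rw [show ((2 : ENNReal)).toReal = ((2 : ℕ) : ℝ) by norm_num] at h
    simp_rw [Real.rpow_natCast] at h
    exact h
  -- the coefficient function and the fiber sums
  set co : V → ℝ := fun v => if v = t.root then 0 else lam v ^ 2 with hco
  set Γ : V → ℝ := fun u => ∑' v : {v : V // t.par v = u}, co ↑v with hΓ
  set B : V → ℝ := fun u => ‖Sl (lp.single 2 u (1 : ℂ))‖ with hB
  -- pointwise formula
  have hpt : ∀ (f : lp (fun _ : V => ℂ) 2) (v : V),
      ‖Sl f v‖ ^ 2 = co v * ‖f (t.par v)‖ ^ 2 := by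
    intro f v
    rw [hSl]
    by_cases hv : v = t.root
    · simp [hco, hv]
    · rw [if_neg hv, norm_mul, mul_pow, Complex.norm_real, Real.norm_eq_abs, sq_abs]
      simp [hco, hv]
  -- master formula
  have master : ∀ f : lp (fun _ : V => ℂ) 2, ‖Sl f‖ ^ 2 = ∑' u, Γ u * ‖f u‖ ^ 2 := by
    intro f
    have hsum : Summable (fun v => co v * ‖f (t.par v)‖ ^ 2) := by
      have := hsummable (Sl f)
      simpa only [funext fun v => hpt f v] using this
    calc ‖Sl f‖ ^ 2 = ∑' v, ‖Sl f v‖ ^ 2 := hnormsq _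
      _ = ∑' v, co v * ‖f (t.par v)‖ ^ 2 := tsum_congr (hpt f)
      _ = ∑' u, ∑' v : {v : V // t.par v = u}, (co ↑v * ‖f (t.par ↑v)‖ ^ 2) :=
          stmt14_fiber_tsum t.par _ hsum
      _ = ∑' u, Γ u * ‖f u‖ ^ 2 := by
          refine tsum_congr fun u => ?_
          have : ∀ v : {v : V // t.par v = u},
              co ↑v * ‖f (t.par ↑v)‖ ^ 2 = co ↑v * ‖f u‖ ^ 2 := by
            intro v; rw [v.2]
          rw [tsum_congr this, tsum_mul_right]
  -- indicator functions
  have hsingle_ap : ∀ u u' : V,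
      (lp.single 2 u (1 : ℂ) : lp (fun _ : V => ℂ) 2) u' = if u' = u then 1 else 0 := by
    intro u u'
    rw [lp.single_apply]
    split <;> simp_all
  have gamma_eq : ∀ u : V, Γ u = B u ^ 2 := by
    intro u
    have h := master (lp.single 2 u (1 : ℂ))
    rw [tsum_eq_single u (fun u' h' => by simp [hsingle_ap, h'])] at h
    rw [hB]
    rw [h, hsingle_ap]
    simp
  -- norm of Sl on a single level
  have hlevel : ∀ (K : ℕ) (f : lp (fun _ : V => ℂ) 2) (u0 : V), t.depth u0 = K →
      (∀ u, t.depth u ≠ K → f u = 0) → ‖Sl f‖ = B u0 * ‖f‖ := by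
    intro K f u0 hu0 hf
    have h2 : ‖Sl f‖ ^ 2 = (B u0 * ‖f‖) ^ 2 := by
      rw [mul_pow, master, hnormsq f, ← tsum_mul_left]
      refine tsum_congr fun u => ?_
      by_cases h : t.depth u = K
      · have hBu : B u = B u0 := hbal u u0 (h.trans hu0.symm)
        rw [gamma_eq, hBu]
      · rw [hf u h]; simp
    have hnn : 0 ≤ B u0 * ‖f‖ := mul_nonneg (norm_nonneg _) (norm_nonneg _)
    calc ‖Sl f‖ = Real.sqrt (‖Sl f‖ ^ 2) := (Real.sqrt_sq (norm_nonneg _)).symm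
      _ = Real.sqrt ((B u0 * ‖f‖) ^ 2) := by rw [h2]
      _ = B u0 * ‖f‖ := Real.sqrt_sq hnn
  -- support shifts by one level
  have hshift : ∀ (K : ℕ) (f : lp (fun _ : V => ℂ) 2),
      (∀ u, t.depth u ≠ K → f u = 0) → ∀ v, t.depth v ≠ K + 1 → Sl f v = 0 := by
    intro K f hf v hv
    rw [hSl]
    by_cases hr : v = t.root
    · simp [hr]
    · rw [if_neg hr, hf (t.par v) ?_, mul_zero]
      intro hpar
      apply hv
      have hd := t.depth_par v hr
      have h0 : t.depth v ≠ 0 := fun h => hr ((t.depth_eq_zero_iff v).mp h)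
      omega
  -- bounds on B
  have hnorm1 : ∀ u : V, ‖(lp.single 2 u (1 : ℂ) : lp (fun _ : V => ℂ) 2)‖ = 1 := by
    intro u
    have := lp.norm_single (p := 2) (E := fun _ : V => ℂ) (by norm_num) u (1 : ℂ)
    simpa using this
  have hB_lb : ∀ u : V, c ≤ B u := by
    intro u
    have := hbelow (lp.single 2 u (1 : ℂ))
    rwa [hnorm1, mul_one] at this
  have hB_ub : ∀ u : V, B u ≤ ‖Sl‖ := by
    intro u
    have := Sl.le_opNorm (lp.single 2 u (1 : ℂ))
    rwa [hnorm1, mul_one] at this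
  have hcM : c ≤ ‖Sl‖ := (hB_lb t.root).trans (hB_ub t.root)
  have hM : 0 < ‖Sl‖ := lt_of_lt_of_le hc hcM
  -- the level norms β
  set β : ℕ → ℝ := fun K => if h : ∃ u, t.depth u = K then B h.choose else c with hβdef
  have hβ_eq : ∀ (K : ℕ) (u0 : V), t.depth u0 = K → β K = B u0 := by
    intro K u0 h
    have hex : ∃ u, t.depth u = K := ⟨u0, h⟩
    have : β K = B hex.choose := by rw [hβdef]; exact dif_pos hex
    rw [this, hB]
    exact hbal _ _ (hex.choose_spec.trans h.symm)
  have hβ_lb : ∀ K, c ≤ β K := by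
    intro K
    rw [hβdef]
    dsimp only
    split
    · exact hB_lb _
    · exact le_refl c
  have hβ_ub : ∀ K, β K ≤ ‖Sl‖ := by
    intro K
    rw [hβdef]
    dsimp only
    split
    · exact hB_ub _
    · exact hcM
  have hβ_pos : ∀ K, 0 < β K := fun K => lt_of_lt_of_le hc (hβ_lb K)
  -- support of iterates
  have hsupp : ∀ (j : J) (n : ℕ) (v : V), t.depth v ≠ k j + n → ((Sl ^ n) (b j)) v = 0 := by
    intro j n
    induction n with
    | zero => simpa using hb_sep j
    | succ n ih =>
        intro v hv
        have hps : (Sl ^ (n + 1)) (b j) = Sl ((Sl ^ n) (b j)) := by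
          rw [pow_succ']; rfl
        rw [hps]
        exact hshift (k j + n) _ ih v (by omega)
  -- norms of iterates
  have hnorm : ∀ (j : J) (n : ℕ),
      ‖(Sl ^ n) (b j)‖ = ∏ m ∈ Finset.range n, β (k j + m) := by
    intro j n
    induction n with
    | zero => simp [hb_on.1 j]
    | succ n ih =>
        have hpos : 0 < ‖(Sl ^ n) (b j)‖ := by
          rw [ih]
          exact Finset.prod_pos fun m _ => hβ_pos _
        obtain ⟨v0, hv0⟩ : ∃ v, ((Sl ^ n) (b j)) v ≠ 0 := by
          by_contra h
          push_neg at h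
          have h2 : ‖(Sl ^ n) (b j)‖ ^ 2 = 0 := by
            rw [hnormsq]; simp only [h]; simp
          have : ‖(Sl ^ n) (b j)‖ = 0 := by
            nlinarith [norm_nonneg ((Sl ^ n) (b j))]
          exact hpos.ne' this
        have hd0 : t.depth v0 = k j + n := by
          by_contra h
          exact hv0 (hsupp j n v0 h)
        have hps : (Sl ^ (n + 1)) (b j) = Sl ((Sl ^ n) (b j)) := by
          rw [pow_succ']; rfl
        rw [hps, hlevel (k j + n) _ v0 hd0 (hsupp j n), ih,
          Finset.prod_range_succ, ← hβ_eq (k j + n) v0 hd0]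
        ring
  -- products
  set P : ℕ → ℕ → ℝ := fun K n => ∏ m ∈ Finset.range n, β (K + m) with hP
  have hP_pos : ∀ K n, 0 < P K n := fun K n => Finset.prod_pos fun m _ => hβ_pos _
  have hP_lb : ∀ K n, c ^ n ≤ P K n := by
    intro K n
    rw [hP]
    calc c ^ n = ∏ _m ∈ Finset.range n, c := by rw [Finset.prod_const, Finset.card_range]
      _ ≤ _ := Finset.prod_le_prod (fun m _ => hc.le) (fun m _ => hβ_lb _)
  have hP_ub : ∀ K n, P K n ≤ ‖Sl‖ ^ n := by
    intro K n
    rw [hP]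
    calc (∏ m ∈ Finset.range n, β (K + m)) ≤ ∏ _m ∈ Finset.range n, ‖Sl‖ :=
          Finset.prod_le_prod (fun m _ => (hβ_pos _).le) (fun m _ => hβ_ub _)
      _ = ‖Sl‖ ^ n := by rw [Finset.prod_const, Finset.card_range]
  -- telescoping identity
  have hident : ∀ e d n : ℕ, e ≤ d → P d n * P e (d - e) = P e n * P (e + n) (d - e) := by
    intro e d n hed
    have h1 : ∏ m ∈ Finset.range ((d - e) + n), β (e + m)
        = P e (d - e) * P d n := by
      rw [Finset.prod_range_add]
      congr 1
      refine Finset.prod_congr rfl fun m _ => ?_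
      congr 1
      omega
    have h2 : ∏ m ∈ Finset.range (n + (d - e)), β (e + m)
        = P e n * P (e + n) (d - e) := by
      rw [Finset.prod_range_add]
      congr 1
      refine Finset.prod_congr rfl fun m _ => ?_
      congr 1
      omega
    rw [mul_comm (P d n)]
    rw [← h1, ← h2, Nat.add_comm (d - e) n]
  -- ratio bounds (ordered case)
  have hratio : ∀ e d n : ℕ, e ≤ d →
      (c / ‖Sl‖) ^ (d - e) ≤ P d n / P e n ∧ P d n / P e n ≤ (‖Sl‖ / c) ^ (d - e) := by
    intro e d n hed
    have hkey : P d n / P e n = P (e + n) (d - e) / P e (d - e) := by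
      rw [div_eq_div_iff (hP_pos e n).ne' (hP_pos e (d - e)).ne']
      rw [mul_comm (P (e + n) (d - e)) (P e n)]
      exact hident e d n hed
    constructor
    · rw [hkey, div_pow]
      exact div_le_div₀ (hP_pos _ _).le (hP_lb _ _) (hP_pos _ _) (hP_ub _ _)
    · rw [hkey, div_pow]
      exact div_le_div₀ (pow_nonneg hM.le _) (hP_ub _ _) (pow_pos hc _) (hP_lb _ _)
  -- conclusion
  intro i j
  rcases le_total (k j) (k i) with hle | hle
  · refine ⟨(c / ‖Sl‖) ^ (k i - k j), (‖Sl‖ / c) ^ (k i - k j),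
      pow_pos (div_pos hc hM) _, pow_pos (div_pos hM hc) _, fun n => ?_⟩
    rw [hnorm i n, hnorm j n]
    exact hratio (k j) (k i) n hle
  · refine ⟨(c / ‖Sl‖) ^ (k j - k i), (‖Sl‖ / c) ^ (k j - k i),
      pow_pos (div_pos hc hM) _, pow_pos (div_pos hM hc) _, fun n => ?_⟩
    rw [hnorm i n, hnorm j n]
    obtain ⟨h1, h2⟩ := hratio (k i) (k j) n hle
    have hinv : P (k i) n / P (k j) n = (P (k j) n / P (k i) n)⁻¹ := by
      rw [inv_div]
    have hq_pos : 0 < P (k j) n / P (k i) n := div_pos (hP_pos _ _) (hP_pos _ _)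
    constructor
    · rw [hinv, show (c / ‖Sl‖) ^ (k j - k i) = ((‖Sl‖ / c) ^ (k j - k i))⁻¹ by
        rw [← inv_pow, inv_div]]
      exact inv_anti₀ hq_pos h2
    · rw [hinv, show (‖Sl‖ / c) ^ (k j - k i) = ((c / ‖Sl‖) ^ (k j - k i))⁻¹ by
        rw [← inv_pow, inv_div]]
      exact inv_anti₀ (pow_pos (div_pos hc hM) _) h1
end

section
/- Let T be a bounded, left-invertible and analytic operator on a complex Hilbert space H; set E = ker T*, P_E the orthogonal projection onto E, L = (T*T)⁻¹T*. Assume that for every bounded operator A on H the following equivalence holds: A ∈ W(T) if and only if there exists a : ℕ → ℂ with P_E L^n(A f) = Σ_{k=0}^{n} a_k·(P_E L^{n−k} f) for all f ∈ H and n ∈ ℕ. Then T is reflexive: every bounded operator B on H such that B(M) ⊆ M for every closed subspace M ⊆ H with T(M) ⊆ M belongs to W(T). -/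
open scoped ComplexConjugate InnerProductSpace
open Finset ContinuousLinearMap

local notation "⟪" x ", " y "⟫" => @inner ℂ _ _ x y

set_option maxHeartbeats 1000000

lemma funct_scalar {H : Type*} [NormedAddCommGroup H] [InnerProductSpace ℂ H]
    (φ ψ : H →L[ℂ] ℂ) (x : H) (hx : φ x = 1)
    (hker : ∀ y, φ y = 0 → ψ y = 0) : ∀ y, ψ y = ψ x * φ y := by
  intro y
  have h1 : φ (y - φ y • x) = 0 := by
    simp [map_sub, map_smul, hx, smul_eq_mul]
  have h2 := hker _ h1
  simp only [map_sub, map_smul, smul_eq_mul, sub_eq_zero] at h2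
  rw [h2, mul_comm]

lemma nat_le_two_pow (n : ℕ) : (n : ℝ) + 2 ≤ 2 ^ (n + 1) := by
  induction n with
  | zero => norm_num
  | succ k ih =>
    have : (2:ℝ) ^ (k + 1 + 1) = 2 * 2 ^ (k + 1) := by ring
    rw [this]
    push_cast
    push_cast at ih
    nlinarith

lemma coeff_eq_zero_of_tsum_eq_zero (c : ℕ → ℂ) (M r ρ : ℝ) (hr : 0 ≤ r) (hρ : 0 < ρ)
    (hρr : ρ * r < 1) (hc : ∀ n, ‖c n‖ ≤ M * r ^ n)
    (h : ∀ z : ℂ, 0 < ‖z‖ → ‖z‖ < ρ → ∑' n, c n * z ^ n = 0) : ∀ n, c n = 0 := by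
  have hM : 0 ≤ M := by
    have := hc 0
    simp only [pow_zero, mul_one] at this
    exact le_trans (norm_nonneg _) this
  -- summability of shifted series
  have hsum : ∀ (m : ℕ) (z : ℂ), ‖z‖ < ρ → Summable (fun n => c (n + m) * z ^ n) := by
    intro m z hz
    have hrρ' : r * ρ < 1 := by rwa [mul_comm] at hρr
    apply Summable.of_norm_bounded (g := fun n => (M * r ^ m) * (r * ρ) ^ n)
    · exact (summable_geometric_of_lt_one (by positivity) hrρ').mul_left _
    · intro n
      have h1 : ‖c (n + m) * z ^ n‖ ≤ (M * r ^ (n + m)) * ‖z‖ ^ n := by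
        rw [norm_mul, norm_pow]
        exact mul_le_mul (hc _) le_rfl (by positivity) (by positivity)
      refine h1.trans ?_
      rw [pow_add]
      have h2 : ‖z‖ ^ n ≤ ρ ^ n := pow_le_pow_left₀ (norm_nonneg _) hz.le n
      calc M * (r ^ n * r ^ m) * ‖z‖ ^ n ≤ M * (r ^ n * r ^ m) * ρ ^ n := by
            apply mul_le_mul_of_nonneg_left h2 (by positivity)
        _ = (M * r ^ m) * (r * ρ) ^ n := by rw [mul_pow]; ring
  -- the key induction
  suffices hind : ∀ m : ℕ, (∀ z : ℂ, 0 < ‖z‖ → ‖z‖ < ρ → ∑' n, c (n + m) * z ^ n = 0) → c m = 0 ∧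
      (∀ z : ℂ, 0 < ‖z‖ → ‖z‖ < ρ → ∑' n, c (n + m + 1) * z ^ n = 0) by
    have main : ∀ m : ℕ, ∀ z : ℂ, 0 < ‖z‖ → ‖z‖ < ρ → ∑' n, c (n + m) * z ^ n = 0 := by
      intro m
      induction m with
      | zero => intro z h1 h2; simpa using h z h1 h2
      | succ k ih =>
        intro z h1 h2
        have := (hind k ih).2 z h1 h2
        simpa [add_assoc] using this
    intro n
    exact (hind n (main n)).1
  intro m hm
  -- split: ∑' c (n+m) z^n = c m + z * ∑' c (n+m+1) z^n
  have hsplit : ∀ z : ℂ, ‖z‖ < ρ →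
      ∑' n, c (n + m) * z ^ n = c m + z * ∑' n, c (n + m + 1) * z ^ n := by
    intro z hz
    rw [Summable.tsum_eq_zero_add (hsum m z hz)]
    simp only [pow_zero, mul_one, zero_add]
    congr 1
    rw [← tsum_mul_left]
    apply tsum_congr
    intro n
    rw [pow_succ]
    ring
  -- tail bound
  set K : ℝ := (M * r ^ (m + 1)) * (1 - r * ρ)⁻¹ with hK
  have hrρ : r * ρ < 1 := by rwa [mul_comm] at hρr
  have htail : ∀ z : ℂ, ‖z‖ < ρ → ‖∑' n, c (n + m + 1) * z ^ n‖ ≤ K := by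
    intro z hz
    have hs := hsum (m + 1) z hz
    have hb : ∀ n : ℕ, ‖c (n + (m + 1)) * z ^ n‖ ≤ (M * r ^ (m + 1)) * (r * ρ) ^ n := by
      intro n
      rw [norm_mul, norm_pow]
      calc ‖c (n + (m + 1))‖ * ‖z‖ ^ n ≤ (M * r ^ (n + (m + 1))) * ρ ^ n :=
            mul_le_mul (hc _) (pow_le_pow_left₀ (norm_nonneg _) hz.le n) (by positivity) (by positivity)
        _ = (M * r ^ (m + 1)) * (r * ρ) ^ n := by rw [pow_add, mul_pow]; ring
    have hgs : HasSum (fun n => (M * r ^ (m+1)) * (r * ρ) ^ n) ((M * r ^ (m+1)) * (1 - r * ρ)⁻¹) :=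
      (hasSum_geometric_of_lt_one (by positivity) hrρ).mul_left _
    exact tsum_of_norm_bounded hgs hb
  have hK0 : 0 ≤ K := by
    have : 0 ≤ (1 - r * ρ)⁻¹ := by
      apply inv_nonneg.2; linarith
    positivity
  have hcm : c m = 0 := by
    by_contra hne
    have hlt : ∀ z : ℂ, 0 < ‖z‖ → ‖z‖ < ρ → ‖c m‖ ≤ ‖z‖ * K := by
      intro z h1 h2
      have h0 := hm z h1 h2
      rw [hsplit z h2] at h0
      have : c m = -(z * ∑' n, c (n + m + 1) * z ^ n) := by linear_combination h0
      rw [this, norm_neg, norm_mul]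
      exact mul_le_mul_of_nonneg_left (htail z h2) (norm_nonneg _)
    have hpos : 0 < ‖c m‖ := norm_pos_iff.2 hne
    obtain ⟨ε, hε0, hε1, hε2⟩ : ∃ ε : ℝ, 0 < ε ∧ ε < ρ ∧ ε * K < ‖c m‖ := by
      refine ⟨min (ρ / 2) (‖c m‖ / (2 * (K + 1))), ?_, ?_, ?_⟩
      · positivity
      · exact lt_of_le_of_lt (min_le_left _ _) (by linarith)
      · calc min (ρ / 2) (‖c m‖ / (2 * (K + 1))) * K ≤ (‖c m‖ / (2 * (K + 1))) * K :=
              mul_le_mul_of_nonneg_right (min_le_right _ _) hK0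
          _ < ‖c m‖ := by
              rw [div_mul_eq_mul_div, div_lt_iff₀ (by positivity)]
              nlinarith
    have := hlt (ε : ℂ) (by simpa [Complex.norm_real, abs_of_pos hε0] using hε0)
      (by simpa [Complex.norm_real, abs_of_pos hε0] using hε1)
    rw [Complex.norm_real, Real.norm_eq_abs, abs_of_pos hε0] at this
    linarith
  refine ⟨hcm, ?_⟩
  intro z h1 h2
  have h0 := hm z h1 h2
  rw [hsplit z h2, hcm, zero_add] at h0
  have hz : z ≠ 0 := norm_pos_iff.mp h1
  rcases mul_eq_zero.mp h0 with h0 | h0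
  · exact absurd h0 hz
  · exact h0



/-- `A` belongs to `W(B)`, the smallest subalgebra of bounded operators containing `B` (and
the identity) that is closed in the weak operator topology. -/
def MemWOTAlgebra {H : Type*} [NormedAddCommGroup H] [InnerProductSpace ℂ H]
    (B A : H →L[ℂ] H) : Prop :=
  ∀ 𝒜 : Subalgebra ℂ (H →L[ℂ] H), B ∈ 𝒜 →
    IsClosed ((ContinuousLinearMapWOT.ofCLM : (H →L[ℂ] H) → H →WOT[ℂ] H) '' (𝒜 : Set (H →L[ℂ] H))) → A ∈ 𝒜

/-- Let `T` be bounded, left-invertible, analytic on a complex Hilbert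
space `H`.  If `W(T)` coincides with the set of generalized multiplication operators with
scalar symbols, then `T` is reflexive: every bounded operator leaving invariant each closed
`T`-invariant subspace belongs to `W(T)`. -/
theorem stmt_17
    {H : Type*} [NormedAddCommGroup H] [InnerProductSpace ℂ H] [CompleteSpace H]
    (T S : H →L[ℂ] H)
    (hbelow : ∃ α : ℝ, 0 < α ∧ ∀ f : H, α * ‖f‖ ^ 2 ≤ ‖T f‖ ^ 2)
    (hanalytic : (⨅ n : ℕ, LinearMap.range ((T ^ n : H →L[ℂ] H) : H →ₗ[ℂ] H)) = ⊥)
    (hS1 : S * (ContinuousLinearMap.adjoint T * T) = 1)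
    (hS2 : (ContinuousLinearMap.adjoint T * T) * S = 1)
    (L : H →L[ℂ] H) (hL : L = S * ContinuousLinearMap.adjoint T)
    (hW : ∀ A : H →L[ℂ] H, MemWOTAlgebra T A ↔
      ∃ a : ℕ → ℂ, ∀ (f : H) (n : ℕ),
        Submodule.orthogonalProjectionOnto (LinearMap.ker (ContinuousLinearMap.adjoint T : H →ₗ[ℂ] H))
            ((L ^ n) (A f)) =
          ∑ k ∈ Finset.range (n + 1), a k •
            Submodule.orthogonalProjectionOnto (LinearMap.ker (ContinuousLinearMap.adjoint T : H →ₗ[ℂ] H))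
              ((L ^ (n - k)) f)) :
    ∀ B : H →L[ℂ] H,
      (∀ M : Submodule ℂ H, IsClosed (M : Set H) →
        (∀ x ∈ M, T x ∈ M) → (∀ x ∈ M, B x ∈ M)) →
      MemWOTAlgebra T B := by
  intro B hB
  set E : Submodule ℂ H := LinearMap.ker (ContinuousLinearMap.adjoint T : H →ₗ[ℂ] H) with hEdef
  by_cases hEbot : E = ⊥
  · -- degenerate case : H is trivial
    obtain ⟨α, hα, hle⟩ := hbelow
    have hk : 0 < Real.sqrt α := Real.sqrt_pos.mpr hα
    have hlow : ∀ f : H, Real.sqrt α * ‖f‖ ≤ ‖T f‖ := by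
      intro f
      have h1 : Real.sqrt (α * ‖f‖ ^ 2) ≤ Real.sqrt (‖T f‖ ^ 2) := Real.sqrt_le_sqrt (hle f)
      rwa [Real.sqrt_mul hα.le, Real.sqrt_sq (norm_nonneg _), Real.sqrt_sq (norm_nonneg _)] at h1
    have hanti : AntilipschitzWith ⟨(Real.sqrt α)⁻¹, by positivity⟩ T := by
      apply T.antilipschitz_of_bound
      intro x
      change ‖x‖ ≤ (Real.sqrt α)⁻¹ * ‖T x‖
      rw [← div_eq_inv_mul, le_div_iff₀ hk, mul_comm]
      exact hlow x
    have hclosed : IsClosed (Set.range T) := hanti.isClosed_range T.uniformContinuous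
    have hclosed' : IsClosed ((LinearMap.range (T : H →ₗ[ℂ] H) : Submodule ℂ H) : Set H) := by
      rw [LinearMap.coe_range]; exact hclosed
    haveI hcomp : CompleteSpace (LinearMap.range (T : H →ₗ[ℂ] H)) := hclosed'.completeSpace_coe
    have hrangeT : LinearMap.range (T : H →ₗ[ℂ] H) = ⊤ := by
      apply Submodule.orthogonal_eq_bot_iff.mp
      apply (Submodule.eq_bot_iff _).mpr
      intro x hx
      have hxE : x ∈ E := by
        rw [hEdef, LinearMap.mem_ker, ContinuousLinearMap.coe_coe]
        rw [← inner_self_eq_zero (𝕜 := ℂ) (x := ContinuousLinearMap.adjoint T x)]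
        rw [ContinuousLinearMap.adjoint_inner_left]
        exact (Submodule.mem_orthogonal' _ _).mp hx _ ⟨_, rfl⟩
      rw [hEbot] at hxE
      exact hxE
    have hsurj : Function.Surjective T := LinearMap.range_eq_top.mp hrangeT
    have hsurjn : ∀ n : ℕ, Function.Surjective (T ^ n : H →L[ℂ] H) := by
      intro n
      induction n with
      | zero => simpa [pow_zero] using Function.surjective_id
      | succ k ih =>
        have : (⇑(T ^ (k+1) : H →L[ℂ] H)) = ⇑T ∘ ⇑(T ^ k : H →L[ℂ] H) := by
          funext x
          rw [pow_succ']
          rfl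
        rw [this]
        exact hsurj.comp ih
    have htop : (⊤ : Submodule ℂ H) = ⊥ := by
      have hrn : ∀ n : ℕ, LinearMap.range ((T ^ n : H →L[ℂ] H) : H →ₗ[ℂ] H) = ⊤ :=
        fun n => LinearMap.range_eq_top.mpr (hsurjn n)
      rw [← hanalytic]
      simp only [hrn, iInf_const]
    have htriv : ∀ x : H, x = 0 := by
      intro x
      have : x ∈ (⊤ : Submodule ℂ H) := Submodule.mem_top
      rw [htop] at this
      simpa using this
    refine (hW B).mpr ⟨0, fun f n => ?_⟩
    exact Subtype.ext (by rw [htriv ((E.orthogonalProjectionOnto ((L ^ n) (B f)) : H)),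
      htriv ((∑ k ∈ Finset.range (n + 1), (0:ℕ → ℂ) k •
        E.orthogonalProjectionOnto ((L ^ (n - k)) f) : E) : H)])
  · -- main case
    obtain ⟨e, heE, he0⟩ := Submodule.exists_mem_ne_zero_of_ne_bot hEbot
    set P' : H →L[ℂ] H := E.subtypeL.comp (E.orthogonalProjectionOnto) with hP'def
    have hP'coe : ∀ x : H, P' x = (E.orthogonalProjectionOnto x : H) := fun x => rfl
    -- basic operator identities
    have hLT1 : L * T = 1 := by rw [hL, mul_assoc]; exact hS1
    have hLT : ∀ x : H, L (T x) = x := by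
      intro x
      have : (L * T) x = (1 : H →L[ℂ] H) x := by rw [hLT1]
      simpa [ContinuousLinearMap.mul_apply] using this
    have hLe : ∀ x ∈ E, L x = 0 := by
      intro x hx
      rw [hEdef, LinearMap.mem_ker, ContinuousLinearMap.coe_coe] at hx
      rw [hL]
      simp [ContinuousLinearMap.mul_apply, hx]
    have hPT : ∀ x : H, P' (T x) = 0 := by
      intro x
      have hmem : T x ∈ Eᗮ := by
        rw [Submodule.mem_orthogonal]
        intro u hu
        rw [hEdef, LinearMap.mem_ker, ContinuousLinearMap.coe_coe] at hu
        rw [← ContinuousLinearMap.adjoint_inner_left, hu, inner_zero_left]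
      rw [hP'coe, Submodule.orthogonalProjectionOnto_apply_of_mem_orthogonal hmem,
        Submodule.coe_zero]
    have hPe : ∀ x ∈ E, P' x = x := by
      intro x hx
      rw [hP'coe]; exact Submodule.starProjection_eq_self_iff.mpr hx
    have hLnT : ∀ (n : ℕ) (x : H), (L ^ (n + 1)) (T x) = (L ^ n) x := by
      intro n x
      rw [pow_succ]
      simp only [ContinuousLinearMap.mul_apply]
      rw [hLT]
    have hLnTn : ∀ (n : ℕ) (x : H), (L ^ n) ((T ^ n) x) = x := by
      intro n
      induction n with
      | zero => intro x; simp
      | succ k ih =>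
        intro x
        have h1 : (T ^ (k + 1)) x = T ((T ^ k) x) := by rw [pow_succ']; rfl
        rw [h1, hLnT k ((T ^ k) x), ih]
    have hLne : ∀ n : ℕ, (L ^ (n + 1)) e = 0 := by
      intro n
      rw [pow_succ]
      simp only [ContinuousLinearMap.mul_apply]
      rw [hLe e heE, map_zero]
    -- norms
    set r : ℝ := ‖L‖ with hrdef
    have hr0 : 0 ≤ r := norm_nonneg _
    have hLn_norm : ∀ (n : ℕ) (x : H), ‖(L ^ n) x‖ ≤ r ^ n * ‖x‖ := by
      intro n
      induction n with
      | zero => intro x; simp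
      | succ k ih =>
        intro x
        have h1 : (L ^ (k + 1)) x = L ((L ^ k) x) := by rw [pow_succ']; rfl
        rw [h1]
        calc ‖L ((L ^ k) x)‖ ≤ r * ‖(L ^ k) x‖ := L.le_opNorm _
          _ ≤ r * (r ^ k * ‖x‖) := mul_le_mul_of_nonneg_left (ih x) hr0
          _ = r ^ (k + 1) * ‖x‖ := by ring
    have hP'_norm : ∀ x : H, ‖P' x‖ ≤ ‖x‖ := by
      intro x
      rw [hP'coe]
      have h1 : ‖E.orthogonalProjectionOnto x‖ ≤ ‖E.orthogonalProjectionOnto‖ * ‖x‖ :=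
        (E.orthogonalProjectionOnto).le_opNorm x
      calc ‖(E.orthogonalProjectionOnto x : H)‖ = ‖E.orthogonalProjectionOnto x‖ := rfl
        _ ≤ ‖E.orthogonalProjectionOnto‖ * ‖x‖ := h1
        _ ≤ 1 * ‖x‖ := mul_le_mul_of_nonneg_right (E.orthogonalProjectionOnto_norm_le) (norm_nonneg _)
        _ = ‖x‖ := one_mul _
    have hC_norm : ∀ (n : ℕ) (x : H), ‖P' ((L ^ n) x)‖ ≤ r ^ n * ‖x‖ :=
      fun n x => (hP'_norm _).trans (hLn_norm n x)
    -- the cyclic subspace generated by e, and the coefficients a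
    set Sp : Submodule ℂ H := Submodule.span ℂ (Set.range fun k : ℕ => (T ^ k) e) with hSpdef
    set Me : Submodule ℂ H := Sp.topologicalClosure with hMedef
    have hMe_closed : IsClosed (Me : Set H) := Sp.isClosed_topologicalClosure
    have hSp_inv : ∀ x ∈ Sp, T x ∈ Sp := by
      intro x hx
      induction hx using Submodule.span_induction with
      | mem y hy =>
        obtain ⟨k, rfl⟩ := hy
        apply Submodule.subset_span
        refine ⟨k + 1, ?_⟩
        show (T ^ (k + 1)) e = T ((T ^ k) e)
        rw [pow_succ']
        rfl
      | zero => simpa using Submodule.zero_mem Sp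
      | add y z _ _ hy hz => rw [map_add]; exact Submodule.add_mem _ hy hz
      | smul c y _ hy => rw [map_smul]; exact Submodule.smul_mem _ _ hy
    have hMe_inv : ∀ x ∈ Me, T x ∈ Me := by
      intro x hx
      have h1 : T x ∈ closure (T '' (Sp : Set H)) := by
        apply image_closure_subset_closure_image T.continuous
        exact Set.mem_image_of_mem _ hx
      apply closure_mono _ h1
      intro y hy
      obtain ⟨w, hw, rfl⟩ := hy
      exact hSp_inv w hw
    have he_mem : e ∈ Me := by
      apply Submodule.le_topologicalClosure
      apply Submodule.subset_span
      exact ⟨0, by simp⟩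
    have hBe_mem : B e ∈ Me := hB Me hMe_closed hMe_inv e he_mem
    -- P' ∘ L^n maps Me into span {e}
    have hCspan : ∀ n : ℕ, P' ((L ^ n) (B e)) ∈ Submodule.span ℂ {e} := by
      intro n
      have hcl : IsClosed ((Submodule.span ℂ {e} : Submodule ℂ H) : Set H) :=
        (Submodule.span ℂ {e}).closed_of_finiteDimensional
      have hgen : ∀ k : ℕ, P' ((L ^ n) ((T ^ k) e)) ∈ Submodule.span ℂ {e} := by
        intro k
        rcases lt_trichotomy k n with hkn | rfl | hkn
        · -- k < n : L^n (T^k e) = L^(n-k) e = 0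
          obtain ⟨j, rfl⟩ : ∃ j, n = k + (j + 1) :=
            ⟨n - k - 1, by omega⟩
          have h1 : (L ^ (k + (j + 1))) ((T ^ k) e) = (L ^ (j + 1)) ((L ^ k) ((T ^ k) e)) := by
            rw [add_comm k (j+1), pow_add]
            rfl
          rw [h1, hLnTn, hLne, map_zero]
          exact Submodule.zero_mem _
        · rw [hLnTn]
          rw [hPe e heE]
          exact Submodule.mem_span_singleton_self e
        · -- n < k : L^n (T^k e) = T^(k-n) e, and P' (T ...) = 0
          obtain ⟨j, rfl⟩ : ∃ j, k = n + (j + 1) := ⟨k - n - 1, by omega⟩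
          have h1 : (T ^ (n + (j + 1))) e = (T ^ n) ((T ^ (j+1)) e) := by
            rw [pow_add]
            rfl
          rw [h1, hLnTn]
          have h2 : (T ^ (j + 1)) e = T ((T ^ j) e) := by rw [pow_succ']; rfl
          rw [h2, hPT]
          exact Submodule.zero_mem _
      have hmap : ∀ x ∈ Sp, P' ((L ^ n) x) ∈ Submodule.span ℂ {e} := by
        intro x hx
        induction hx using Submodule.span_induction with
        | mem y hy => obtain ⟨k, rfl⟩ := hy; exact hgen k
        | zero => simp only [map_zero]; exact Submodule.zero_mem _
        | add y z _ _ hy hz => rw [map_add, map_add]; exact Submodule.add_mem _ hy hz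
        | smul c y _ hy => rw [map_smul, map_smul]; exact Submodule.smul_mem _ _ hy
      have h3 : P' ((L ^ n) (B e)) ∈ closure ((Submodule.span ℂ {e} : Submodule ℂ H) : Set H) := by
        have h4 : P' ((L ^ n) (B e)) ∈ closure ((P'.comp (L ^ n)) '' (Sp : Set H)) := by
          apply image_closure_subset_closure_image (P'.comp (L ^ n)).continuous
          exact Set.mem_image_of_mem _ hBe_mem
        apply closure_mono _ h4
        intro y hy
        obtain ⟨w, hw, rfl⟩ := hy
        exact hmap w hw
      rwa [hcl.closure_eq] at h3
    choose a ha using fun n => Submodule.mem_span_singleton.mp (hCspan n)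
    -- ha : ∀ n, a n • e = P' ((L ^ n) (B e))
    have ha_bound : ∀ n : ℕ, ‖a n‖ ≤ ‖B‖ * r ^ n := by
      intro n
      have h1 : ‖a n • e‖ = ‖a n‖ * ‖e‖ := by rw [norm_smul]
      have h2 : ‖P' ((L ^ n) (B e))‖ ≤ r ^ n * (‖B‖ * ‖e‖) := by
        refine (hC_norm n (B e)).trans ?_
        exact mul_le_mul_of_nonneg_left (B.le_opNorm e) (by positivity)
      rw [← ha n, h1] at h2
      have he0' : 0 < ‖e‖ := norm_pos_iff.mpr he0
      rw [← mul_le_mul_iff_of_pos_right he0']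
      calc ‖a n‖ * ‖e‖ ≤ r ^ n * (‖B‖ * ‖e‖) := h2
        _ = ‖B‖ * r ^ n * ‖e‖ := by ring
    -- radius
    set ρ : ℝ := (4 * (r + 1))⁻¹ with hρdef
    have hρ0 : 0 < ρ := by rw [hρdef]; positivity
    have hρr : ρ * r < 1 := by
      rw [hρdef]
      have h1 : (4 * (r + 1))⁻¹ * r = r / (4 * (r + 1)) := by ring
      rw [h1, div_lt_one (by positivity)]
      linarith
    have hρrc : ρ * (2 * (r + 1)) < 1 := by
      rw [hρdef]
      have h1 : (4 * (r + 1))⁻¹ * (2 * (r + 1)) = (2 * (r + 1)) / (4 * (r + 1)) := by ring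
      rw [h1, div_lt_one (by positivity)]
      linarith
    -- the key identity, for every z in the ball
    have hkey : ∀ z : ℂ, ‖z‖ < ρ → ∀ u f : H,
        (∑' n : ℕ, z ^ n * ⟪u, P' ((L ^ n) (B f))⟫) =
          (∑' n : ℕ, a n * z ^ n) * (∑' n : ℕ, z ^ n * ⟪u, P' ((L ^ n) f)⟫) := by
      intro z hz
      have hzr : ‖z‖ * r < 1 :=
        lt_of_le_of_lt (mul_le_mul_of_nonneg_right hz.le hr0) hρr
      have hgeo : Summable fun n : ℕ => (‖z‖ * r) ^ n :=
        summable_geometric_of_lt_one (by positivity) hzr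
      have hop_norm : ∀ n : ℕ, ‖z ^ n • (P'.comp (L ^ n))‖ ≤ (‖z‖ * r) ^ n := by
        intro n
        rw [norm_smul, norm_pow, mul_pow]
        apply mul_le_mul_of_nonneg_left _ (by positivity)
        apply ContinuousLinearMap.opNorm_le_bound _ (by positivity)
        intro x
        simpa using hC_norm n x
      have hop_sum : Summable (fun n : ℕ => z ^ n • (P'.comp (L ^ n))) :=
        Summable.of_norm_bounded hgeo hop_norm
      set D : H →L[ℂ] H := ∑' n : ℕ, z ^ n • (P'.comp (L ^ n)) with hDdef
      have hvec_norm : ∀ (x : H) (n : ℕ), ‖z ^ n • P' ((L ^ n) x)‖ ≤ (‖z‖ * r) ^ n * ‖x‖ := by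
        intro x n
        rw [norm_smul, norm_pow, mul_pow]
        rw [mul_assoc]
        apply mul_le_mul_of_nonneg_left (hC_norm n x) (by positivity)
      have hvec_sum : ∀ x : H, Summable (fun n : ℕ => z ^ n • P' ((L ^ n) x)) := by
        intro x
        exact Summable.of_norm_bounded (hgeo.mul_right ‖x‖) (hvec_norm x)
      have hDapply : ∀ x : H, D x = ∑' n : ℕ, z ^ n • P' ((L ^ n) x) := by
        intro x
        rw [hDdef]
        have h := (ContinuousLinearMap.apply ℂ H x).map_tsum hop_sum
        simp only [ContinuousLinearMap.apply_apply, ContinuousLinearMap.smul_apply,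
          ContinuousLinearMap.comp_apply] at h
        exact h
      have hscal_norm : ∀ (u x : H) (n : ℕ),
          ‖z ^ n * ⟪u, P' ((L ^ n) x)⟫‖ ≤ ‖u‖ * ‖x‖ * (‖z‖ * r) ^ n := by
        intro u x n
        rw [norm_mul, norm_pow]
        calc ‖z‖ ^ n * ‖⟪u, P' ((L ^ n) x)⟫‖ ≤ ‖z‖ ^ n * (‖u‖ * (r ^ n * ‖x‖)) := by
              apply mul_le_mul_of_nonneg_left _ (by positivity)
              calc ‖⟪u, P' ((L ^ n) x)⟫‖ ≤ ‖u‖ * ‖P' ((L ^ n) x)‖ := norm_inner_le_norm _ _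
                _ ≤ ‖u‖ * (r ^ n * ‖x‖) :=
                  mul_le_mul_of_nonneg_left (hC_norm n x) (norm_nonneg _)
          _ = ‖u‖ * ‖x‖ * (‖z‖ * r) ^ n := by rw [mul_pow]; ring
      have hscal_sum : ∀ u x : H, Summable (fun n : ℕ => z ^ n * ⟪u, P' ((L ^ n) x)⟫) := by
        intro u x
        exact Summable.of_norm_bounded (hgeo.mul_left (‖u‖ * ‖x‖)) (hscal_norm u x)
      have hpair : ∀ u x : H, ⟪u, D x⟫ = ∑' n : ℕ, z ^ n * ⟪u, P' ((L ^ n) x)⟫ := by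
        intro u x
        have h := (innerSL ℂ u).map_tsum (hvec_sum x)
        simp only [innerSL_apply_apply] at h
        rw [hDapply, h]
        apply tsum_congr
        intro n
        rw [inner_smul_right]
      have hDT : ∀ x : H, D (T x) = z • D x := by
        intro x
        rw [hDapply (T x), Summable.tsum_eq_zero_add (hvec_sum (T x))]
        have h0 : z ^ 0 • P' ((L ^ 0) (T x)) = 0 := by
          simpa using hPT x
        rw [h0, zero_add]
        have h1 : ∀ n : ℕ, z ^ (n + 1) • P' ((L ^ (n + 1)) (T x)) = z • (z ^ n • P' ((L ^ n) x)) := by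
          intro n
          rw [hLnT n x, smul_smul, pow_succ']
        rw [tsum_congr h1, Summable.tsum_const_smul z (hvec_sum x), ← hDapply x]
      have hDe : D e = e := by
        rw [hDapply e, tsum_eq_single 0 ?_]
        · simp [hPe e heE]
        · intro n hn
          obtain ⟨m, rfl⟩ := Nat.exists_eq_succ_of_ne_zero hn
          rw [hLne m, map_zero, smul_zero]
      have ha_sum : Summable (fun n : ℕ => a n * z ^ n) := by
        apply Summable.of_norm_bounded (hgeo.mul_left ‖B‖)
        intro n
        rw [norm_mul, norm_pow]
        calc ‖a n‖ * ‖z‖ ^ n ≤ (‖B‖ * r ^ n) * ‖z‖ ^ n :=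
              mul_le_mul_of_nonneg_right (ha_bound n) (by positivity)
          _ = ‖B‖ * (‖z‖ * r) ^ n := by rw [mul_pow]; ring
      set χ : ℂ := ∑' n : ℕ, a n * z ^ n with hχdef
      have hDBe : D (B e) = χ • e := by
        rw [hDapply (B e)]
        have h1 : ∀ n : ℕ, z ^ n • P' ((L ^ n) (B e)) = (a n * z ^ n) • e := by
          intro n
          rw [← ha n, smul_smul, mul_comm]
        rw [tsum_congr h1, Summable.tsum_smul_const ha_sum]
      have hmain1 : ∀ u : H, ⟪u, e⟫ ≠ 0 → ∀ f : H, ⟪u, D (B f)⟫ = χ * ⟪u, D f⟫ := by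
        intro u hu f
        set ψ : H →L[ℂ] ℂ := (innerSL ℂ u).comp D with hψdef
        have hψapp : ∀ x : H, ψ x = ⟪u, D x⟫ := fun x => rfl
        have hψT : ∀ x : H, ψ (T x) = z * ψ x := by
          intro x
          rw [hψapp, hψapp, hDT, inner_smul_right]
        have hker_inv : ∀ x ∈ LinearMap.ker (ψ : H →ₗ[ℂ] ℂ), T x ∈ LinearMap.ker (ψ : H →ₗ[ℂ] ℂ) := by
          intro x hx
          rw [LinearMap.mem_ker, ContinuousLinearMap.coe_coe] at hx ⊢
          rw [hψT, hx, mul_zero]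
        have hker_closed : IsClosed ((LinearMap.ker (ψ : H →ₗ[ℂ] ℂ) : Submodule ℂ H) : Set H) :=
          ContinuousLinearMap.isClosed_ker ψ
        have hBker := hB _ hker_closed hker_inv
        have he1 : ψ (⟪u, e⟫⁻¹ • e) = 1 := by
          rw [map_smul, hψapp, hDe, smul_eq_mul, inv_mul_cancel₀ hu]
        have hscalar := funct_scalar ψ (ψ.comp B) (⟪u, e⟫⁻¹ • e) he1 ?_
        · have h2 := hscalar f
          have hbx : (ψ.comp B) (⟪u, e⟫⁻¹ • e) = χ := by
            have h4 : (ψ.comp B) (⟪u, e⟫⁻¹ • e) = ⟪u, e⟫⁻¹ * (χ * ⟪u, e⟫) := by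
              have h5 : (ψ.comp B) (⟪u, e⟫⁻¹ • e) = ⟪u, e⟫⁻¹ • ((ψ.comp B) e) :=
                map_smul (ψ.comp B) _ _
              have h6 : (ψ.comp B) e = χ * ⟪u, e⟫ := by
                have h7 : (ψ.comp B) e = ⟪u, D (B e)⟫ := rfl
                rw [h7, hDBe, inner_smul_right]
              rw [h5, h6, smul_eq_mul]
            rw [h4, ← mul_assoc, mul_comm (⟪u, e⟫⁻¹) χ, mul_assoc, inv_mul_cancel₀ hu, mul_one]
          rw [hbx] at h2
          calc ⟪u, D (B f)⟫ = (ψ.comp B) f := rfl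
            _ = χ * ψ f := h2
            _ = χ * ⟪u, D f⟫ := by rw [hψapp]
        · intro y hy
          show ψ (B y) = 0
          have hyk : y ∈ LinearMap.ker (ψ : H →ₗ[ℂ] ℂ) := LinearMap.mem_ker.mpr hy
          have := hBker y hyk
          rwa [LinearMap.mem_ker] at this
      have hmain : ∀ u f : H, ⟪u, D (B f)⟫ = χ * ⟪u, D f⟫ := by
        intro u f
        by_cases hu : ⟪u, e⟫ = 0
        · have hue : ⟪u + e, e⟫ ≠ 0 := by
            rw [inner_add_left, hu, zero_add]
            exact inner_self_ne_zero.mpr he0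
          have h1 := hmain1 (u + e) hue f
          have h2 := hmain1 e (inner_self_ne_zero.mpr he0) f
          rw [inner_add_left, inner_add_left] at h1
          rw [h2] at h1
          have h3 : ⟪u, D (B f)⟫ = χ * (⟪u, D f⟫ + ⟪e, D f⟫) - χ * ⟪e, D f⟫ := by
            linear_combination h1
          rw [h3]
          ring
        · exact hmain1 u hu f
      intro u f
      rw [← hpair, ← hpair, hmain]
    -- conclude via hW
    refine (hW B).mpr ⟨a, fun f n => ?_⟩
    have hfin : ∀ u : H, ⟪u, P' ((L ^ n) (B f))⟫ =
        ∑ k ∈ Finset.range (n + 1), a k * ⟪u, P' ((L ^ (n - k)) f)⟫ := by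
      intro u
      set KB : ℝ := (‖u‖ + 1) * (‖B‖ + 1) * (‖f‖ + 1) with hKBdef
      have hnn : 0 ≤ ‖u‖ ∧ 0 ≤ ‖B‖ ∧ 0 ≤ ‖f‖ := ⟨norm_nonneg u, norm_nonneg B, norm_nonneg f⟩
      obtain ⟨hn1, hn2, hn3⟩ := hnn
      have hKB1 : 1 ≤ KB := by
        rw [hKBdef]
        nlinarith [mul_nonneg hn1 hn2, mul_nonneg hn1 hn3, mul_nonneg hn2 hn3,
          mul_nonneg (mul_nonneg hn1 hn2) hn3]
      have hKB0 : 0 < KB := lt_of_lt_of_le one_pos hKB1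
      have hxb : ∀ m : ℕ, ‖⟪u, P' ((L ^ m) (B f))⟫‖ ≤ KB * r ^ m := by
        intro m
        calc ‖⟪u, P' ((L ^ m) (B f))⟫‖ ≤ ‖u‖ * ‖P' ((L ^ m) (B f))‖ := norm_inner_le_norm _ _
          _ ≤ ‖u‖ * (r ^ m * ‖B f‖) :=
            mul_le_mul_of_nonneg_left (hC_norm m (B f)) (norm_nonneg _)
          _ ≤ ‖u‖ * (r ^ m * (‖B‖ * ‖f‖)) := by
            apply mul_le_mul_of_nonneg_left _ (norm_nonneg _)
            exact mul_le_mul_of_nonneg_left (B.le_opNorm f) (by positivity)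
          _ = (‖u‖ * ‖B‖ * ‖f‖) * r ^ m := by ring
          _ ≤ KB * r ^ m := by
            apply mul_le_mul_of_nonneg_right _ (by positivity)
            rw [hKBdef]
            nlinarith [mul_nonneg hn1 hn2, mul_nonneg hn1 hn3, mul_nonneg hn2 hn3,
              mul_nonneg (mul_nonneg hn1 hn2) hn3]
      have hyb : ∀ m : ℕ, ‖⟪u, P' ((L ^ m) f)⟫‖ ≤ KB * r ^ m := by
        intro m
        calc ‖⟪u, P' ((L ^ m) f)⟫‖ ≤ ‖u‖ * ‖P' ((L ^ m) f)‖ := norm_inner_le_norm _ _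
          _ ≤ ‖u‖ * (r ^ m * ‖f‖) :=
            mul_le_mul_of_nonneg_left (hC_norm m f) (norm_nonneg _)
          _ = (‖u‖ * ‖f‖) * r ^ m := by ring
          _ ≤ KB * r ^ m := by
            apply mul_le_mul_of_nonneg_right _ (by positivity)
            rw [hKBdef]
            nlinarith [mul_nonneg hn1 hn2, mul_nonneg hn1 hn3, mul_nonneg hn2 hn3,
              mul_nonneg (mul_nonneg hn1 hn2) hn3]
      set c : ℕ → ℂ := fun m => ⟪u, P' ((L ^ m) (B f))⟫ -
        ∑ k ∈ Finset.range (m + 1), a k * ⟪u, P' ((L ^ (m - k)) f)⟫ with hcdef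
      have hsb : ∀ m : ℕ, ‖∑ k ∈ Finset.range (m + 1), a k * ⟪u, P' ((L ^ (m - k)) f)⟫‖ ≤
          ((m : ℝ) + 1) * (KB * KB * r ^ m) := by
        intro m
        calc ‖∑ k ∈ Finset.range (m + 1), a k * ⟪u, P' ((L ^ (m - k)) f)⟫‖ ≤
            ∑ k ∈ Finset.range (m + 1), ‖a k * ⟪u, P' ((L ^ (m - k)) f)⟫‖ :=
              norm_sum_le _ _
          _ ≤ ∑ k ∈ Finset.range (m + 1), KB * KB * r ^ m := by
            apply Finset.sum_le_sum
            intro k hk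
            have hkm : k ≤ m := Nat.lt_succ_iff.mp (Finset.mem_range.mp hk)
            rw [norm_mul]
            calc ‖a k‖ * ‖⟪u, P' ((L ^ (m - k)) f)⟫‖ ≤ (‖B‖ * r ^ k) * (KB * r ^ (m - k)) := by
                  apply mul_le_mul (ha_bound k) (hyb (m - k)) (norm_nonneg _) (by positivity)
              _ = (‖B‖ * KB) * (r ^ k * r ^ (m - k)) := by ring
              _ = (‖B‖ * KB) * r ^ m := by rw [← pow_add, Nat.add_sub_cancel' hkm]
              _ ≤ KB * KB * r ^ m := by
                apply mul_le_mul_of_nonneg_right _ (by positivity)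
                apply mul_le_mul_of_nonneg_right _ hKB0.le
                rw [hKBdef]
                nlinarith [mul_nonneg hn1 hn2, mul_nonneg hn1 hn3, mul_nonneg hn2 hn3,
                  mul_nonneg (mul_nonneg hn1 hn2) hn3]
          _ = ((m : ℝ) + 1) * (KB * KB * r ^ m) := by
            rw [Finset.sum_const, Finset.card_range]
            push_cast
            ring
      have hcb : ∀ m : ℕ, ‖c m‖ ≤ (2 * KB * KB) * (2 * (r + 1)) ^ m := by
        intro m
        rw [hcdef]
        have h1 : ‖⟪u, P' ((L ^ m) (B f))⟫ -
            ∑ k ∈ Finset.range (m + 1), a k * ⟪u, P' ((L ^ (m - k)) f)⟫‖ ≤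
            KB * r ^ m + ((m : ℝ) + 1) * (KB * KB * r ^ m) :=
          (norm_sub_le _ _).trans (add_le_add (hxb m) (hsb m))
        refine h1.trans ?_
        have h2 : KB * r ^ m + ((m : ℝ) + 1) * (KB * KB * r ^ m) ≤
            ((m : ℝ) + 2) * (KB * KB * r ^ m) := by
          have h3 : KB * r ^ m ≤ KB * KB * r ^ m := by
            nlinarith [mul_nonneg (mul_nonneg hKB0.le (sub_nonneg.mpr hKB1)) (pow_nonneg hr0 m)]
          nlinarith [h3]
        refine h2.trans ?_
        have h5 : ((m : ℝ) + 2) ≤ 2 ^ (m + 1) := nat_le_two_pow m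
        have h6 : r ^ m ≤ (r + 1) ^ m := pow_le_pow_left₀ hr0 (by linarith) m
        calc ((m : ℝ) + 2) * (KB * KB * r ^ m) ≤ 2 ^ (m + 1) * (KB * KB * (r + 1) ^ m) := by
              apply mul_le_mul h5 _ (by positivity) (by positivity)
              exact mul_le_mul_of_nonneg_left h6 (by positivity)
          _ = (2 * KB * KB) * (2 * (r + 1)) ^ m := by
            rw [mul_pow, pow_succ]
            ring
      have hvanish : ∀ z : ℂ, 0 < ‖z‖ → ‖z‖ < ρ → ∑' m, c m * z ^ m = 0 := by
        intro z hz0 hz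
        have hzr : ‖z‖ * r < 1 :=
          lt_of_le_of_lt (mul_le_mul_of_nonneg_right hz.le hr0) hρr
        have hgeo : Summable fun m : ℕ => (‖z‖ * r) ^ m :=
          summable_geometric_of_lt_one (by positivity) hzr
        -- summability of the three series
        have hxnorm : Summable fun m : ℕ => ‖⟪u, P' ((L ^ m) (B f))⟫ * z ^ m‖ := by
          apply Summable.of_nonneg_of_le (fun m => norm_nonneg _) _ (hgeo.mul_left KB)
          intro m
          rw [norm_mul, norm_pow]
          calc ‖⟪u, P' ((L ^ m) (B f))⟫‖ * ‖z‖ ^ m ≤ (KB * r ^ m) * ‖z‖ ^ m :=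
                mul_le_mul_of_nonneg_right (hxb m) (by positivity)
            _ = KB * (‖z‖ * r) ^ m := by rw [mul_pow]; ring
        have hynorm : Summable fun m : ℕ => ‖⟪u, P' ((L ^ m) f)⟫ * z ^ m‖ := by
          apply Summable.of_nonneg_of_le (fun m => norm_nonneg _) _ (hgeo.mul_left KB)
          intro m
          rw [norm_mul, norm_pow]
          calc ‖⟪u, P' ((L ^ m) f)⟫‖ * ‖z‖ ^ m ≤ (KB * r ^ m) * ‖z‖ ^ m :=
                mul_le_mul_of_nonneg_right (hyb m) (by positivity)
            _ = KB * (‖z‖ * r) ^ m := by rw [mul_pow]; ring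
        have hanorm : Summable fun m : ℕ => ‖a m * z ^ m‖ := by
          apply Summable.of_nonneg_of_le (fun m => norm_nonneg _) _ (hgeo.mul_left ‖B‖)
          intro m
          rw [norm_mul, norm_pow]
          calc ‖a m‖ * ‖z‖ ^ m ≤ (‖B‖ * r ^ m) * ‖z‖ ^ m :=
                mul_le_mul_of_nonneg_right (ha_bound m) (by positivity)
            _ = ‖B‖ * (‖z‖ * r) ^ m := by rw [mul_pow]; ring
        -- Cauchy product
        have hcauchy := tsum_mul_tsum_eq_tsum_sum_range_of_summable_norm hanorm hynorm
        have hss : Summable fun m : ℕ => ∑ k ∈ Finset.range (m + 1),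
            (a k * z ^ k) * (⟪u, P' ((L ^ (m - k)) f)⟫ * z ^ (m - k)) :=
          (summable_norm_sum_mul_range_of_summable_norm hanorm hynorm).of_norm
        have hterm : ∀ m : ℕ, ∑ k ∈ Finset.range (m + 1),
            (a k * z ^ k) * (⟪u, P' ((L ^ (m - k)) f)⟫ * z ^ (m - k)) =
            (∑ k ∈ Finset.range (m + 1), a k * ⟪u, P' ((L ^ (m - k)) f)⟫) * z ^ m := by
          intro m
          rw [Finset.sum_mul]
          apply Finset.sum_congr rfl
          intro k hk
          have hkm : k ≤ m := Nat.lt_succ_iff.mp (Finset.mem_range.mp hk)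
          have hzz : z ^ k * z ^ (m - k) = z ^ m := by
            rw [← pow_add, Nat.add_sub_cancel' hkm]
          calc (a k * z ^ k) * (⟪u, P' ((L ^ (m - k)) f)⟫ * z ^ (m - k)) =
              (a k * ⟪u, P' ((L ^ (m - k)) f)⟫) * (z ^ k * z ^ (m - k)) := by ring
            _ = (a k * ⟪u, P' ((L ^ (m - k)) f)⟫) * z ^ m := by rw [hzz]
        -- the key identity at z
        have hk1 := hkey z hz u f
        have hswapx : (∑' m : ℕ, z ^ m * ⟪u, P' ((L ^ m) (B f))⟫) =
            ∑' m : ℕ, ⟪u, P' ((L ^ m) (B f))⟫ * z ^ m := tsum_congr fun m => mul_comm _ _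
        have hswapy : (∑' m : ℕ, z ^ m * ⟪u, P' ((L ^ m) f)⟫) =
            ∑' m : ℕ, ⟪u, P' ((L ^ m) f)⟫ * z ^ m := tsum_congr fun m => mul_comm _ _
        rw [hswapx, hswapy] at hk1
        rw [hcauchy] at hk1
        rw [tsum_congr hterm] at hk1
        -- now subtract
        have hsub : ∀ m : ℕ, c m * z ^ m =
            ⟪u, P' ((L ^ m) (B f))⟫ * z ^ m -
            (∑ k ∈ Finset.range (m + 1), a k * ⟪u, P' ((L ^ (m - k)) f)⟫) * z ^ m := by
          intro m
          rw [hcdef]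
          ring
        rw [tsum_congr hsub]
        have hss2 : Summable fun m : ℕ =>
            (∑ k ∈ Finset.range (m + 1), a k * ⟪u, P' ((L ^ (m - k)) f)⟫) * z ^ m := by
          apply hss.congr
          intro m
          exact hterm m
        rw [Summable.tsum_sub hxnorm.of_norm hss2]
        rw [hk1]
        ring
      have hczero := coeff_eq_zero_of_tsum_eq_zero c (2 * KB * KB) (2 * (r + 1)) ρ
        (by positivity) hρ0 hρrc hcb hvanish
      have := hczero n
      rw [hcdef] at this
      linear_combination this
    -- translate back to the orthogonal projection statement
    have hv : P' ((L ^ n) (B f)) = ∑ k ∈ Finset.range (n + 1), a k • P' ((L ^ (n - k)) f) := by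
      apply ext_inner_left ℂ
      intro v
      rw [inner_sum]
      simp only [inner_smul_right]
      exact hfin v
    refine Subtype.ext ?_
    have hcoe : ((∑ k ∈ Finset.range (n + 1), a k •
        E.orthogonalProjectionOnto ((L ^ (n - k)) f) : E) : H) =
        ∑ k ∈ Finset.range (n + 1), a k • P' ((L ^ (n - k)) f) := by
      rw [AddSubmonoidClass.coe_finset_sum]
      apply Finset.sum_congr rfl
      intro k _
      rw [Submodule.coe_smul, hP'coe]
    rw [hcoe, ← hP'coe]
    exact hv
end
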